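/- arXiv:1310.5746 — 2 statements merged into one kernel-verified Lean document; each statement's English description precedes it below -/
import Mathlib

section
/- For F ∈ SMU(δ=1) (saturated minimally unsatisfiable of deficiency 1), the doped clause-set D(F) has exactly 2^{c(F)} − 1 prime implicates, namely { pure(D(F')) : ∅ ≠ F' ⊆ F }. -/
/-- Literals: a variable (ℕ) with a polarity. -/
abbrev Lit := ℕ × Bool

/-- Complement of a literal. -/
def Lit.comp (x : Lit) : Lit := (x.1, !x.2)

/-- A clause is a finite set of literals. -/
abbrev Clause := Finset Lit

/-- A clause-set (CNF). -/
abbrev ClauseSet := Finset Clause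

/-- Complementation of all literals of a clause. -/
def Clause.compl (C : Clause) : Clause := C.image Lit.comp

/-- Value of a literal under a total assignment. -/
def Lit.eval (a : ℕ → Bool) (x : Lit) : Bool := if x.2 then a x.1 else !(a x.1)

/-- A clause is satisfied by an assignment iff some literal evaluates to true. -/
def Clause.sat (a : ℕ → Bool) (C : Clause) : Prop := ∃ x ∈ C, Lit.eval a x = true

/-- An assignment satisfies a clause-set (as CNF) iff it satisfies every clause. -/
def satisfies (a : ℕ → Bool) (F : ClauseSet) : Prop := ∀ C ∈ F, Clause.sat a C

/-- Semantic entailment of a clause. -/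
def entails (F : ClauseSet) (C : Clause) : Prop := ∀ a, satisfies a F → Clause.sat a C

def unsat (F : ClauseSet) : Prop := ¬ ∃ a, satisfies a F

/-- Logical equivalence of clause-sets. -/
def equivCls (F G : ClauseSet) : Prop := ∀ a, satisfies a F ↔ satisfies a G

/-- Minimally unsatisfiable clause-sets. -/
def minUnsat (F : ClauseSet) : Prop := unsat F ∧ ∀ F' ⊂ F, ¬ unsat F'

/-- A clause is complement-free (no clashing pair). -/
def tautFree (C : Clause) : Prop := ∀ x ∈ C, Lit.comp x ∉ C

/-- F is a minimal premise set for clause C. -/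
def mpsFor (F : ClauseSet) (C : Clause) : Prop :=
  tautFree C ∧ entails F C ∧ ∀ F' ⊂ F, ¬ entails F' C

/-- F is a minimal premise set. -/
def isMps (F : ClauseSet) : Prop := ∃ C, mpsFor F C

/-- C is a prime implicate of F. -/
def primeImp (F : ClauseSet) (C : Clause) : Prop :=
  tautFree C ∧ entails F C ∧ ∀ C' ⊂ C, ¬ entails F C'

/-- The set of all prime implicates of F. -/
def primeSet (F : ClauseSet) : Set Clause := {C | primeImp F C}

/-- The set of literals occurring in F. -/
def lits (F : ClauseSet) : Finset Lit := F.sup id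

/-- The pure clause of F: the set of pure literals of F. -/
def pureC (F : ClauseSet) : Clause := (lits F).filter (fun x => Lit.comp x ∉ lits F)

def varsC (C : Clause) : Finset ℕ := C.image Prod.fst

def vars (F : ClauseSet) : Finset ℕ := F.sup varsC

/-- Partial assignments. -/
abbrev PAssign := ℕ → Option Bool

/-- Value of a literal under a partial assignment. -/
def Lit.pval (φ : PAssign) (x : Lit) : Option Bool :=
  (φ x.1).map (fun b => if x.2 then b else !b)

/-- Removing falsified literals from a clause. -/
def papplyC (φ : PAssign) (C : Clause) : Clause := C.filter (fun x => Lit.pval φ x ≠ some false)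

/-- A clause is satisfied by a partial assignment. -/
def csat (φ : PAssign) (C : Clause) : Prop := ∃ x ∈ C, Lit.pval φ x = some true

instance (φ : PAssign) (C : Clause) : Decidable (csat φ C) := by
  unfold csat; exact inferInstance

/-- Application φ * F of a partial assignment to a clause-set. -/
def papply (φ : PAssign) (F : ClauseSet) : ClauseSet :=
  (F.filter (fun C => ¬ csat φ C)).image (papplyC φ)

/-- The partial assignment setting precisely the pure literals of F to false. -/
def pureFalse (F : ClauseSet) : PAssign := fun v =>
  if ((v, true) : Lit) ∈ pureC F then some false
  else if ((v, false) : Lit) ∈ pureC F then some true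
  else none

/-- Doping: add a fresh positive variable `u C` to every clause C. -/
def dope (u : Clause → ℕ) (F : ClauseSet) : ClauseSet :=
  F.image (fun C => insert ((u C, true) : Lit) C)

/-- The doping variables are fresh and pairwise distinct. -/
def freshDoping (u : Clause → ℕ) (F : ClauseSet) : Prop :=
  (∀ C ∈ F, u C ∉ vars F) ∧ Set.InjOn u ↑F

/-- Resolution trees: axioms at leaves, resolution steps at inner nodes
(with the designated resolution literal). -/
inductive ResTree where
  | ax : Clause → ResTree
  | res : Lit → ResTree → ResTree → ResTree

/-- Conclusion clause of a resolution tree. -/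
def ResTree.concl : ResTree → Clause
  | .ax C => C
  | .res x T1 T2 => (T1.concl ∪ T2.concl) \ {x, Lit.comp x}

/-- Validity: at each step the two parents clash in exactly the resolution literal. -/
def ResTree.valid : ResTree → Prop
  | .ax _ => True
  | .res x T1 T2 => T1.valid ∧ T2.valid ∧ T1.concl ∩ Clause.compl T2.concl = {x}

/-- Axioms (leaf clauses) of a resolution tree. -/
def ResTree.axioms : ResTree → ClauseSet
  | .ax C => {C}
  | .res _ T1 T2 => T1.axioms ∪ T2.axioms

/-- Horton-Strahler number of a resolution tree. -/
def ResTree.hts : ResTree → ℕ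
  | .ax _ => 0
  | .res _ T1 T2 => if T1.hts = T2.hts then T1.hts + 1 else max T1.hts T2.hts

/-- Regularity: no resolution variable repeated on a root-to-leaf path. -/
def ResTree.regAux : ResTree → Finset ℕ → Prop
  | .ax _, _ => True
  | .res x T1 T2, S => x.1 ∉ S ∧ T1.regAux (insert x.1 S) ∧ T2.regAux (insert x.1 S)

def ResTree.regular (T : ResTree) : Prop := T.regAux ∅

/-- k-resolution: each step has a parent clause of length at most k. -/
def ResTree.kres (k : ℕ) : ResTree → Prop
  | .ax _ => True
  | .res _ T1 T2 => (T1.concl.card ≤ k ∨ T2.concl.card ≤ k) ∧ T1.kres k ∧ T2.kres k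

/-- F has a resolution refutation of Horton-Strahler number at most k. -/
def refutesLe (F : ClauseSet) (k : ℕ) : Prop :=
  ∃ T : ResTree, T.valid ∧ T.axioms ⊆ F ∧ T.concl = ∅ ∧ T.hts ≤ k

/-- Hardness at most k: every unsatisfiable instantiation has a refutation of
Horton-Strahler number at most k. -/
def hdLe (F : ClauseSet) (k : ℕ) : Prop :=
  ∀ φ : PAssign, unsat (papply φ F) → refutesLe (papply φ F) k

/-- Hardness. -/
noncomputable def hd (F : ClauseSet) : ℕ := sInf {k | hdLe F k}

/-- F has a k-resolution refutation. -/
def kresRefutes (F : ClauseSet) (k : ℕ) : Prop :=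
  ∃ T : ResTree, T.valid ∧ T.axioms ⊆ F ∧ T.concl = ∅ ∧ ResTree.kres k T

/-- Asymmetric width-hardness at most k. -/
def whdLe (F : ClauseSet) (k : ℕ) : Prop :=
  ∀ φ : PAssign, unsat (papply φ F) → kresRefutes (papply φ F) k

/-- Hyperedge E^k_C of the trigger hypergraph of F. -/
def Ek (F : ClauseSet) (k : ℕ) (C : Clause) : Set Clause :=
  {C' | primeImp F C' ∧ C' ∩ Clause.compl C = ∅ ∧ (C' \ C).card ≤ k}

/-- Saturated minimal unsatisfiability. -/
def saturatedMU (F : ClauseSet) : Prop :=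
  minUnsat F ∧ ∀ C ∈ F, ∀ x : Lit, x.1 ∉ varsC C →
    ¬ unsat (insert (insert x C) (F.erase C))

/-!
An SMU(δ=1) clause-set with a variable contains two sibling clauses `C ∪ {w}`, `C ∪ {¬w}`: by
Tarsi's lemma and a counting argument, a variable missing from the most clauses occurs in only
two clauses, and saturation forces these to agree outside it. Replacing the siblings by `C`
stays in SMU(δ=1) and removes `w`, so `F` is the set of leaf clauses of a binary tree with
distinct labels.

For sets of leaves `G` of such a tree, `G ⊨ Q` holds iff `pure(G'') ⊆ Q` for some nonempty
`G'' ⊆ G`, and distinct nonempty sets of leaves have incomparable pure clauses (both by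
induction on the tree). Doping reduces entailment: `D(F) ⊨ P` iff the clauses whose doping
literal is in `P` entail the part of `P` over `vars F`. Hence the prime implicates of `D(F)` are
the clauses `pure(D(F')) = {u C : C ∈ F'} ∪ pure(F')`, and their doping literals recover `F'`.
-/

open Finset

namespace Lit

@[simp] lemma comp_comp (x : Lit) : x.comp.comp = x := by
  simp [Lit.comp]

@[simp] lemma fst_comp (x : Lit) : x.comp.1 = x.1 := rfl

lemma comp_ne_self (x : Lit) : x.comp ≠ x := by
  simp [Lit.comp, Prod.ext_iff]

lemma eval_eq_true_iff {a : ℕ → Bool} {x : Lit} : x.eval a = true ↔ a x.1 = x.2 := by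
  obtain ⟨v, p⟩ := x; cases p <;> simp [Lit.eval]

lemma eval_eq_false_iff {a : ℕ → Bool} {x : Lit} : x.eval a = false ↔ a x.1 = !x.2 := by
  obtain ⟨v, p⟩ := x; cases p <;> simp [Lit.eval]

@[simp] lemma eval_comp (a : ℕ → Bool) (x : Lit) : x.comp.eval a = !x.eval a := by
  obtain ⟨v, p⟩ := x; cases p <;> simp [Lit.eval, Lit.comp]

lemma eval_congr {a b : ℕ → Bool} {x : Lit} (h : a x.1 = b x.1) : x.eval a = x.eval b := by
  simp [Lit.eval, h]

lemma eval_update_self (a : ℕ → Bool) (x : Lit) : x.eval (Function.update a x.1 x.2) = true :=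
  eval_eq_true_iff.2 (by simp)

lemma eval_update_of_ne {a : ℕ → Bool} {x : Lit} {v : ℕ} {b : Bool} (h : x.1 ≠ v) :
    x.eval (Function.update a v b) = x.eval a :=
  eval_congr (by simp [h])

lemma eq_or_eq_comp_of_fst_eq {x y : Lit} (h : x.1 = y.1) : x = y ∨ x = y.comp := by
  obtain ⟨v, p⟩ := x; obtain ⟨w, q⟩ := y
  simp only at h; subst h
  cases p <;> cases q <;> simp [Lit.comp]

end Lit

lemma mem_varsC {v : ℕ} {C : Clause} : v ∈ varsC C ↔ ∃ x ∈ C, x.1 = v := by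
  simp [varsC]

lemma mem_varsC_of_mem {x : Lit} {C : Clause} (h : x ∈ C) : x.1 ∈ varsC C :=
  mem_varsC.2 ⟨x, h, rfl⟩

@[simp] lemma varsC_insert (x : Lit) (C : Clause) : varsC (insert x C) = insert x.1 (varsC C) :=
  image_insert _ _ _

lemma varsC_mono {C D : Clause} (h : C ⊆ D) : varsC C ⊆ varsC D :=
  image_subset_image h

lemma mem_vars {v : ℕ} {F : ClauseSet} : v ∈ vars F ↔ ∃ C ∈ F, v ∈ varsC C := by
  simp [vars]

lemma mem_lits {x : Lit} {F : ClauseSet} : x ∈ lits F ↔ ∃ C ∈ F, x ∈ C := by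
  simp [lits]

lemma varsC_subset_vars {C : Clause} {F : ClauseSet} (h : C ∈ F) : varsC C ⊆ vars F :=
  fun _ hv => mem_vars.2 ⟨C, h, hv⟩

lemma vars_mono {F G : ClauseSet} (h : F ⊆ G) : vars F ⊆ vars G :=
  sup_mono h

lemma lits_mono {F G : ClauseSet} (h : F ⊆ G) : lits F ⊆ lits G :=
  sup_mono h

@[simp] lemma vars_empty : vars ∅ = ∅ := rfl

lemma vars_union (F G : ClauseSet) : vars (F ∪ G) = vars F ∪ vars G :=
  sup_union

lemma lits_union (F G : ClauseSet) : lits (F ∪ G) = lits F ∪ lits G :=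
  sup_union

lemma fst_mem_vars_of_mem_lits {x : Lit} {F : ClauseSet} (h : x ∈ lits F) : x.1 ∈ vars F := by
  obtain ⟨C, hC, hx⟩ := mem_lits.1 h
  exact varsC_subset_vars hC (mem_varsC_of_mem hx)

lemma mem_pureC {x : Lit} {F : ClauseSet} : x ∈ pureC F ↔ x ∈ lits F ∧ x.comp ∉ lits F := by
  simp [pureC]

lemma pureC_tautFree (F : ClauseSet) : tautFree (pureC F) :=
  fun _ hx hcx => (mem_pureC.1 hx).2 (mem_pureC.1 hcx).1

lemma tautFree.mono {C D : Clause} (h : C ⊆ D) (hD : tautFree D) : tautFree C :=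
  fun x hx hcx => hD x (h hx) (h hcx)

lemma Clause.sat_congr {a b : ℕ → Bool} {C : Clause} (h : ∀ v ∈ varsC C, a v = b v) :
    C.sat a ↔ C.sat b := by
  refine exists_congr fun x => and_congr_right fun hx => ?_
  rw [Lit.eval_congr (h _ (mem_varsC_of_mem hx))]

lemma Clause.sat.mono {a : ℕ → Bool} {C D : Clause} (h : C.sat a) (hCD : C ⊆ D) : D.sat a :=
  let ⟨x, hx, hev⟩ := h; ⟨x, hCD hx, hev⟩

lemma Clause.sat_insert {a : ℕ → Bool} {x : Lit} {C : Clause} :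
    (insert x C).sat a ↔ x.eval a = true ∨ C.sat a := by
  simp [Clause.sat]

lemma Clause.not_sat_iff {a : ℕ → Bool} {C : Clause} :
    ¬ C.sat a ↔ ∀ x ∈ C, x.eval a = false := by
  simp [Clause.sat]

lemma Clause.eq_of_not_sat {a b : ℕ → Bool} {C : Clause} (ha : ¬ C.sat a) (hb : ¬ C.sat b)
    {v : ℕ} (hv : v ∈ varsC C) : a v = b v := by
  obtain ⟨x, hx, rfl⟩ := mem_varsC.1 hv
  rw [Lit.eval_eq_false_iff.1 (Clause.not_sat_iff.1 ha x hx),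
    Lit.eval_eq_false_iff.1 (Clause.not_sat_iff.1 hb x hx)]

def Clause.falsifier (Q : Clause) : ℕ → Bool := fun v => decide (((v, true) : Lit) ∉ Q)

lemma Clause.eval_falsifier {Q : Clause} (hQ : tautFree Q) {x : Lit} (hx : x ∈ Q) :
    x.eval Q.falsifier = false := by
  obtain ⟨v, p⟩ := x
  cases p
  · have : ((v, true) : Lit) ∉ Q := hQ _ hx
    simp [Lit.eval, Clause.falsifier, this]
  · simp [Lit.eval, Clause.falsifier, hx]

lemma satisfies_congr {a b : ℕ → Bool} {F : ClauseSet} (h : ∀ v ∈ vars F, a v = b v) :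
    satisfies a F ↔ satisfies b F :=
  forall₂_congr fun _ hC => Clause.sat_congr fun v hv => h v (varsC_subset_vars hC hv)

lemma satisfies.mono {a : ℕ → Bool} {F G : ClauseSet} (h : satisfies a G) (hFG : F ⊆ G) :
    satisfies a F :=
  fun C hC => h C (hFG hC)

lemma satisfies_insert {a : ℕ → Bool} {C : Clause} {F : ClauseSet} :
    satisfies a (insert C F) ↔ C.sat a ∧ satisfies a F := by
  simp [satisfies]

lemma satisfies_union {a : ℕ → Bool} {F G : ClauseSet} :
    satisfies a (F ∪ G) ↔ satisfies a F ∧ satisfies a G := by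
  simp [satisfies, or_imp, forall_and]

lemma satisfies_empty (a : ℕ → Bool) : satisfies a ∅ := by
  simp [satisfies]

lemma not_entails_empty {Q : Clause} (hQ : tautFree Q) : ¬ entails ∅ Q := fun h => by
  obtain ⟨x, hx, hev⟩ := h _ (satisfies_empty Q.falsifier)
  rw [Clause.eval_falsifier hQ hx] at hev
  exact Bool.false_ne_true hev

section MinUnsat

variable {F : ClauseSet}

lemma minUnsat.exists_sat_of_ssubset (h : minUnsat F) {G : ClauseSet} (hG : G ⊂ F) :
    ∃ a, satisfies a G :=
  not_not.1 (h.2 G hG)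

lemma minUnsat.exists_sat_erase (h : minUnsat F) {C : Clause} (hC : C ∈ F) :
    ∃ a, satisfies a (F.erase C) :=
  h.exists_sat_of_ssubset (erase_ssubset hC)

lemma minUnsat.not_sat_of_sat_erase (h : minUnsat F) {C : Clause} (hC : C ∈ F)
    {a : ℕ → Bool} (ha : satisfies a (F.erase C)) : ¬ C.sat a := fun hCa =>
  h.1 ⟨a, by rw [← insert_erase hC]; exact satisfies_insert.2 ⟨hCa, ha⟩⟩

lemma minUnsat.tautFree (h : minUnsat F) {C : Clause} (hC : C ∈ F) : tautFree C := by
  intro x hx hcx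
  obtain ⟨a, ha⟩ := h.exists_sat_erase hC
  refine h.not_sat_of_sat_erase hC ha ?_
  cases hev : x.eval a
  · exact ⟨x.comp, hcx, by simp [hev]⟩
  · exact ⟨x, hx, hev⟩

lemma minUnsat.eq_of_subset (h : minUnsat F) {C D : Clause} (hC : C ∈ F) (hD : D ∈ F)
    (hCD : C ⊆ D) : C = D := by
  by_contra hne
  obtain ⟨a, ha⟩ := h.exists_sat_erase hD
  exact h.not_sat_of_sat_erase hD ha ((ha C (mem_erase.2 ⟨hne, hC⟩)).mono hCD)

lemma minUnsat.exists_mem_of_mem_vars (h : minUnsat F) {v : ℕ} (hv : v ∈ vars F) (p : Bool) :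
    ∃ C ∈ F, ((v, p) : Lit) ∈ C := by
  by_contra! hno
  obtain ⟨C, hC, hvC⟩ := mem_vars.1 hv
  obtain ⟨x, hx, rfl⟩ := mem_varsC.1 hvC
  have only_comp : ∀ D ∈ F, ∀ y ∈ D, y.1 = x.1 → y = (x.1, !p) := by
    intro D hD y hy hyx
    obtain ⟨w, q⟩ := y
    simp only at hyx; subst hyx
    cases p <;> cases q <;> simp_all
  obtain ⟨a, ha⟩ := h.exists_sat_erase hC
  refine h.1 ⟨Function.update a x.1 (!p), fun D hD => ?_⟩
  by_cases hDv : x.1 ∈ varsC D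
  · obtain ⟨y, hy, hyx⟩ := mem_varsC.1 hDv
    refine ⟨y, hy, Lit.eval_eq_true_iff.2 ?_⟩
    rw [only_comp D hD y hy hyx]; simp
  · have hDC : D ≠ C := by rintro rfl; exact hDv (mem_varsC_of_mem hx)
    refine (Clause.sat_congr fun w hw => ?_).1 (ha D (mem_erase.2 ⟨hDC, hD⟩))
    rw [Function.update_of_ne (by rintro rfl; exact hDv hw)]

lemma minUnsat_of_forall_exists_sat_erase (hu : unsat F)
    (h : ∀ C ∈ F, ∃ a, satisfies a (F.erase C)) : minUnsat F := by
  refine ⟨hu, fun G hG hGu => ?_⟩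
  obtain ⟨C, hCF, hCG⟩ := exists_of_ssubset hG
  obtain ⟨a, ha⟩ := h C hCF
  exact hGu ⟨a, ha.mono fun D hD => mem_erase.2 ⟨fun h => hCG (h ▸ hD), hG.1 hD⟩⟩

/-- For a literal whose variable occurs in `C`, this is just minimality: its complement lies
in `C`. -/
lemma saturatedMU.exists_sat_erase (hs : saturatedMU F) {C : Clause} (hC : C ∈ F) {x : Lit}
    (hx : x ∉ C) : ∃ a, satisfies a (F.erase C) ∧ x.eval a = true := by
  by_cases hxC : x.1 ∈ varsC C
  · obtain ⟨y, hy, hyx⟩ := mem_varsC.1 hxC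
    obtain rfl | rfl := Lit.eq_or_eq_comp_of_fst_eq hyx.symm
    · exact absurd hy hx
    · obtain ⟨a, ha⟩ := hs.1.exists_sat_erase hC
      have hy' := Clause.not_sat_iff.1 (hs.1.not_sat_of_sat_erase hC ha) _ hy
      exact ⟨a, ha, by simpa using hy'⟩
  · obtain ⟨a, ha⟩ := not_not.1 (hs.2 C hC x hxC)
    obtain ⟨hxCa, haF⟩ := satisfies_insert.1 ha
    refine ⟨a, haF, ?_⟩
    rcases Clause.sat_insert.1 hxCa with hxa | hCa
    · exact hxa
    · exact absurd hCa (hs.1.not_sat_of_sat_erase hC haF)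

lemma saturatedMU_of_forall_exists_sat_erase (hu : unsat F)
    (h : ∀ C ∈ F, ∀ x ∉ C, ∃ a, satisfies a (F.erase C) ∧ x.eval a = true) :
    saturatedMU F := by
  refine ⟨minUnsat_of_forall_exists_sat_erase hu fun C hC => ?_, fun C hC x hx hxu => ?_⟩
  · obtain ⟨x, hx⟩ := Infinite.exists_notMem_finset C
    obtain ⟨a, ha, -⟩ := h C hC x hx
    exact ⟨a, ha⟩
  · obtain ⟨a, ha, hxa⟩ := h C hC x fun hxC => hx (mem_varsC_of_mem hxC)
    exact hxu ⟨a, satisfies_insert.2 ⟨Clause.sat_insert.2 (Or.inl hxa), ha⟩⟩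

end MinUnsat

/-- Hall's theorem gives each clause of `S` its own variable outside `vars H`; setting it to
satisfy that clause extends a model of `H` to `H ∪ S`. -/
lemma exists_sat_union_of_hall {H S : ClauseSet} {a₀ : ℕ → Bool} (ha₀ : satisfies a₀ H)
    (hall : ∀ T ⊆ S, #T ≤ #(T.biUnion fun C => varsC C \ vars H)) :
    ∃ a, satisfies a (H ∪ S) := by
  classical
  obtain ⟨f, hf, hfS⟩ := (all_card_le_biUnion_card_iff_exists_injective
    fun C : S => varsC C.1 \ vars H).1 fun s => by
      have := hall (s.image Subtype.val) fun C hC => by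
        obtain ⟨⟨D, hD⟩, -, rfl⟩ := mem_image.1 hC; exact hD
      rwa [image_biUnion, card_image_of_injective _ Subtype.val_injective] at this
  have hpick : ∀ C : S, ∃ x ∈ C.1, x.1 = f C := fun C => mem_varsC.1 (mem_sdiff.1 (hfS C)).1
  choose pick hpickC hpickf using hpick
  refine ⟨Function.extend f (fun C => (pick C).2) a₀, fun C hC => ?_⟩
  rcases mem_union.1 hC with hCH | hCS
  · refine (Clause.sat_congr fun v hv => ?_).2 (ha₀ C hCH)
    refine Function.extend_apply' _ _ _ fun ⟨D, hD⟩ => ?_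
    exact (mem_sdiff.1 (hfS D)).2 (hD ▸ varsC_subset_vars hCH hv)
  · refine ⟨pick ⟨C, hCS⟩, hpickC _, Lit.eval_eq_true_iff.2 ?_⟩
    rw [hpickf, hf.extend_apply]

/-- If `H ≠ F`, maximality gives Hall's condition for `F \ H` relative to `vars H`, so a model of
the proper subset `H` extends to `F`. -/
lemma minUnsat.eq_of_deficiency_max {F H : ClauseSet} (h : minUnsat F) (hHF : H ⊆ F)
    (hmax : ∀ H' ⊆ F, (#H' : ℤ) - #(vars H') ≤ #H - #(vars H)) : H = F := by
  classical
  by_contra hne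
  have hall : ∀ T ⊆ F \ H, #T ≤ #(T.biUnion fun C => varsC C \ vars H) := by
    intro T hT
    by_contra! hlt
    have hdisj : Disjoint H T := disjoint_left.2 fun C hCH hCT => (mem_sdiff.1 (hT hCT)).2 hCH
    have hvars : vars (H ∪ T) ⊆ vars H ∪ T.biUnion fun C => varsC C \ vars H := by
      intro v hv
      obtain ⟨C, hC, hvC⟩ := mem_vars.1 hv
      by_cases hvH : v ∈ vars H
      · exact mem_union_left _ hvH
      · refine mem_union_right _ (mem_biUnion.2 ⟨C, ?_, mem_sdiff.2 ⟨hvC, hvH⟩⟩)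
        exact (mem_union.1 hC).resolve_left fun hCH => hvH (varsC_subset_vars hCH hvC)
    have hle := (card_le_card hvars).trans (card_union_le _ _)
    have := hmax (H ∪ T) (union_subset hHF (hT.trans sdiff_subset))
    rw [card_union_of_disjoint hdisj] at this
    omega
  obtain ⟨a₀, ha₀⟩ := h.exists_sat_of_ssubset (Finset.ssubset_iff_subset_ne.2 ⟨hHF, hne⟩)
  obtain ⟨a, ha⟩ := exists_sat_union_of_hall ha₀ hall
  exact h.1 ⟨a, by rwa [union_sdiff_of_subset hHF] at ha⟩

/-- Tarsi's lemma. -/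
theorem minUnsat.card_vars_lt {F : ClauseSet} (h : minUnsat F) : #(vars F) < #F := by
  classical
  obtain ⟨H, hH, hHmax⟩ := exists_max_image F.powerset
    (fun H => (#H : ℤ) - #(vars H)) ⟨∅, empty_mem_powerset F⟩
  have hmax : ∀ H' ⊆ F, (#H' : ℤ) - #(vars H') ≤ #H - #(vars H) :=
    fun H' hH' => hHmax H' (mem_powerset.2 hH')
  obtain rfl := h.eq_of_deficiency_max (mem_powerset.1 hH) hmax
  by_contra! hle
  have hempty : (∅ : ClauseSet) = H :=
    h.eq_of_deficiency_max (empty_subset _) fun H' hH' => by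
      have := hmax H' hH'
      simp only [card_empty, vars_empty, Nat.cast_zero]
      omega
  exact h.1 ⟨fun _ => true, hempty ▸ satisfies_empty _⟩

def withoutLit (x : Lit) (F : ClauseSet) : ClauseSet := F.filter (x ∉ ·)

def withoutVar (v : ℕ) (F : ClauseSet) : ClauseSet := F.filter (v ∉ varsC ·)

/-- The clause-set `⟨x → 1⟩ * F`. -/
def assignTrue (x : Lit) (F : ClauseSet) : ClauseSet := (withoutLit x F).image (·.erase x.comp)

lemma mem_varsC_iff_or {v : ℕ} {C : Clause} :
    v ∈ varsC C ↔ ((v, true) : Lit) ∈ C ∨ ((v, false) : Lit) ∈ C := by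
  refine ⟨fun h => ?_, fun h => h.elim mem_varsC_of_mem mem_varsC_of_mem⟩
  obtain ⟨⟨w, p⟩, hx, rfl⟩ := mem_varsC.1 h
  cases p <;> simp [hx]

lemma satisfies_update_of_satisfies_assignTrue {a : ℕ → Bool} {x : Lit} {F : ClauseSet}
    (h : satisfies a (assignTrue x F)) : satisfies (Function.update a x.1 x.2) F := by
  intro C hC
  by_cases hxC : x ∈ C
  · exact ⟨x, hxC, Lit.eval_update_self a x⟩
  obtain ⟨y, hy, hya⟩ := h _ (mem_image_of_mem _ (mem_filter.2 ⟨hC, hxC⟩))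
  obtain ⟨hyx, hyC⟩ := mem_erase.1 hy
  have hyv : y.1 ≠ x.1 := fun hyv => by
    obtain rfl | rfl := Lit.eq_or_eq_comp_of_fst_eq hyv
    exacts [hxC hyC, hyx rfl]
  exact ⟨y, hyC, by rwa [Lit.eval_update_of_ne hyv]⟩

lemma notMem_vars_withoutVar (v : ℕ) (F : ClauseSet) : v ∉ vars (withoutVar v F) := fun h => by
  obtain ⟨C, hC, hvC⟩ := mem_vars.1 h
  exact (mem_filter.1 hC).2 hvC

lemma withoutLit_inter_withoutLit (v : ℕ) (F : ClauseSet) :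
    withoutLit (v, true) F ∩ withoutLit (v, false) F = withoutVar v F := by
  ext C
  simp +contextual [withoutLit, withoutVar, mem_varsC_iff_or, and_assoc]

lemma minUnsat.withoutLit_union_withoutLit {F : ClauseSet} (h : minUnsat F) (v : ℕ) :
    withoutLit (v, true) F ∪ withoutLit (v, false) F = F := by
  ext C
  simp only [withoutLit, mem_union, mem_filter, ← and_or_left, and_iff_left_iff_imp]
  intro hC
  by_contra! h'
  exact h.tautFree hC _ h'.1 h'.2

lemma minUnsat.mem_vars_withoutLit {F : ClauseSet} (h : minUnsat F) {v : ℕ} (hv : v ∈ vars F)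
    (b : Bool) : v ∈ vars (withoutLit (v, b) F) := by
  obtain ⟨C, hC, hvC⟩ := h.exists_mem_of_mem_vars hv (!b)
  refine mem_vars.2 ⟨C, mem_filter.2 ⟨hC, ?_⟩, mem_varsC_of_mem hvC⟩
  simpa [Lit.comp] using h.tautFree hC _ hvC

section Saturated

variable {F : ClauseSet}

lemma saturatedMU.minUnsat_assignTrue (hs : saturatedMU F) (x : Lit) :
    minUnsat (assignTrue x F) := by
  refine minUnsat_of_forall_exists_sat_erase
    (fun ⟨a, ha⟩ => hs.1.1 ⟨_, satisfies_update_of_satisfies_assignTrue ha⟩) fun D hD => ?_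
  obtain ⟨C, hC, rfl⟩ := mem_image.1 hD
  obtain ⟨hCF, hxC⟩ := mem_filter.1 hC
  obtain ⟨a, ha, hxa⟩ := hs.exists_sat_erase hCF hxC
  refine ⟨a, fun D' hD' => ?_⟩
  obtain ⟨hne, hD'⟩ := mem_erase.1 hD'
  obtain ⟨C', hC', rfl⟩ := mem_image.1 hD'
  have hC'C : C' ≠ C := by rintro rfl; exact hne rfl
  obtain ⟨y, hy, hya⟩ := ha C' (mem_erase.2 ⟨hC'C, (mem_filter.1 hC').1⟩)
  refine ⟨y, mem_erase.2 ⟨?_, hy⟩, hya⟩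
  rintro rfl
  simp [hxa] at hya

/-- Tarsi's lemma for `⟨x → 1⟩ * F`, which is minimally unsatisfiable, has at most as many
clauses and at most one variable fewer. -/
lemma saturatedMU.card_vars_withoutLit_le (hs : saturatedMU F) (x : Lit) :
    #(vars (withoutLit x F)) ≤ #(withoutLit x F) := by
  have hvars : vars (withoutLit x F) ⊆ insert x.1 (vars (assignTrue x F)) := by
    intro v hv
    obtain ⟨C, hC, hvC⟩ := mem_vars.1 hv
    obtain ⟨y, hy, rfl⟩ := mem_varsC.1 hvC
    by_cases hyx : y.1 = x.1
    · exact hyx ▸ mem_insert_self _ _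
    refine mem_insert_of_mem (mem_vars.2 ⟨_, mem_image_of_mem _ hC, mem_varsC_of_mem ?_⟩)
    exact mem_erase.2 ⟨fun h => hyx (by rw [h]; rfl), hy⟩
  have htarsi := (hs.minUnsat_assignTrue x).card_vars_lt
  have hcard : #(assignTrue x F) ≤ #(withoutLit x F) := card_image_le
  have := (card_le_card hvars).trans (card_insert_le _ _)
  omega

/-- Inclusion–exclusion over the clauses avoiding `(v, true)` and those avoiding `(v, false)`. -/
lemma saturatedMU.card_vars_withoutVar_le (hs : saturatedMU F) (hdef : #F = #(vars F) + 1)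
    {v : ℕ} (hv : v ∈ vars F) : #(vars (withoutVar v F)) ≤ #(withoutVar v F) := by
  classical
  set P := withoutLit (v, true) F
  set N := withoutLit (v, false) F
  have hunion : P ∪ N = F := hs.1.withoutLit_union_withoutLit v
  have hinter : P ∩ N = withoutVar v F := withoutLit_inter_withoutLit v F
  have hvPN : v ∈ vars P ∩ vars N :=
    mem_inter.2 ⟨hs.1.mem_vars_withoutLit hv true, hs.1.mem_vars_withoutLit hv false⟩
  have hsub : vars (withoutVar v F) ⊆ (vars P ∩ vars N).erase v := fun w hw =>
    mem_erase.2 ⟨by rintro rfl; exact notMem_vars_withoutVar w F hw,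
      subset_inter (vars_mono inter_subset_left) (vars_mono inter_subset_right) (hinter ▸ hw)⟩
  have hvars := card_union_add_card_inter (vars P) (vars N)
  rw [← vars_union, hunion] at hvars
  have hcls := card_union_add_card_inter P N
  rw [hunion, hinter] at hcls
  have hW := card_le_card hsub
  rw [card_erase_of_mem hvPN] at hW
  have hP : #(vars P) ≤ #P := hs.card_vars_withoutLit_le _
  have hN : #(vars N) ≤ #N := hs.card_vars_withoutLit_le _
  have hpos : 0 < #(vars P ∩ vars N) := card_pos.2 ⟨v, hvPN⟩
  omega

end Saturated

lemma le_one_of_two_pow_le_succ {k : ℕ} (h : 2 ^ k ≤ k + 1) : k ≤ 1 := by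
  by_contra! hk
  have : k + 2 ≤ 2 ^ k := by
    induction k, hk using Nat.le_induction with
    | base => norm_num
    | succ k _ ih => rw [pow_succ]; omega
  omega

/-- Flipping a model of `G` on the subsets of a set `V` of fresh variables falsifies pairwise
different clauses of `F \ G`, provided these all contain every variable of `V`. -/
lemma two_pow_card_le_of_unsat {F G : ClauseSet} (hu : unsat F)
    {a₀ : ℕ → Bool} (ha₀ : satisfies a₀ G) {V : Finset ℕ} (hV : Disjoint V (vars G))
    (hVD : ∀ D ∈ F \ G, V ⊆ varsC D) : 2 ^ #V ≤ #(F \ G) := by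
  classical
  let flip (T : Finset ℕ) (u : ℕ) : Bool := if u ∈ T then !a₀ u else a₀ u
  have hfalse : ∀ T ∈ V.powerset, ∃ D ∈ F \ G, ¬ D.sat (flip T) := by
    intro T hT
    have hG : satisfies (flip T) G := (satisfies_congr fun u hu => by
      have : u ∉ T := fun huT => disjoint_left.1 hV (mem_powerset.1 hT huT) hu
      simp [flip, this]).2 ha₀
    by_contra! h
    refine hu ⟨flip T, fun D hD => ?_⟩
    by_cases hDG : D ∈ G
    exacts [hG D hDG, h D (mem_sdiff.2 ⟨hD, hDG⟩)]
  choose! falsified hmem hnsat using hfalse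
  rw [← card_powerset]
  refine card_le_card_of_injOn falsified hmem fun T hT T' hT' heq => ?_
  simp only [coe_powerset, Set.mem_preimage, Set.mem_powerset_iff, coe_subset] at hT hT'
  ext u
  by_cases huV : u ∈ V
  · have := Clause.eq_of_not_sat (hnsat T (mem_powerset.2 hT))
      (heq ▸ hnsat T' (mem_powerset.2 hT')) (hVD _ (hmem T (mem_powerset.2 hT)) huV)
    by_cases huT : u ∈ T <;> by_cases huT' : u ∈ T' <;> simp_all [flip]
  · exact iff_of_false (fun h => huV (hT h)) fun h => huV (hT' h)

section Saturated

variable {F : ClauseSet}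

lemma subset_varsC_of_withoutVar_max {v : ℕ}
    (hmax : ∀ u ∈ vars F, #(withoutVar u F) ≤ #(withoutVar v F)) {D : Clause}
    (hD : D ∈ F \ withoutVar v F) : vars F \ vars (withoutVar v F) ⊆ varsC D := by
  intro u hu
  obtain ⟨hDF, hDW⟩ := mem_sdiff.1 hD
  obtain ⟨huF, huW⟩ := mem_sdiff.1 hu
  have hsub : withoutVar v F ⊆ withoutVar u F := fun C hC =>
    mem_filter.2 ⟨(mem_filter.1 hC).1, fun huC => huW (mem_vars.2 ⟨C, hC, huC⟩)⟩
  have heq := eq_of_subset_of_card_le hsub (hmax u huF)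
  by_contra huD
  exact hDW (heq ▸ mem_filter.2 ⟨hDF, huD⟩)

/-- A variable missing from the most clauses occurs in exactly two clauses: the clauses containing
it all contain every variable absent from the others, and a counting argument via
`two_pow_card_le_of_unsat` and deficiency 1 shows that there are only two of them. -/
theorem saturatedMU.exists_var_occ_two (hs : saturatedMU F) (hdef : #F = #(vars F) + 1)
    (hn : (vars F).Nonempty) :
    ∃ v, ∃ C₁ ∈ F, ∃ C₂ ∈ F, ((v, true) : Lit) ∈ C₁ ∧ ((v, false) : Lit) ∈ C₂ ∧
      ∀ D ∈ F, v ∈ varsC D → D = C₁ ∨ D = C₂ := by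
  classical
  obtain ⟨v, hv, hmax⟩ := exists_max_image (vars F) (fun v => #(withoutVar v F)) hn
  set W := withoutVar v F
  have hmemW : ∀ D ∈ F, v ∈ varsC D → D ∈ F \ W :=
    fun D hD hvD => mem_sdiff.2 ⟨hD, fun h => (mem_filter.1 h).2 hvD⟩
  obtain ⟨C₁, hC₁, h₁⟩ := hs.1.exists_mem_of_mem_vars hv true
  obtain ⟨C₂, hC₂, h₂⟩ := hs.1.exists_mem_of_mem_vars hv false
  have hWF : W ⊆ F := filter_subset _ _
  obtain ⟨a₀, ha₀⟩ := hs.1.exists_sat_of_ssubset <|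
    ssubset_iff_of_subset hWF |>.2 ⟨C₁, hC₁, (mem_sdiff.1 (hmemW C₁ hC₁ (mem_varsC_of_mem h₁))).2⟩
  have hpow := two_pow_card_le_of_unsat hs.1.1 ha₀ sdiff_disjoint
    fun D hD => subset_varsC_of_withoutVar_max hmax hD
  have hS : #(F \ W) ≤ 2 := by
    have := card_sdiff_add_card_eq_card hWF
    have := card_sdiff_add_card_eq_card (vars_mono hWF)
    have : #(vars W) ≤ #W := hs.card_vars_withoutVar_le hdef hv
    have := le_one_of_two_pow_le_succ (k := #(vars F \ vars W)) (by omega)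
    omega
  refine ⟨v, C₁, hC₁, C₂, hC₂, h₁, h₂, fun D hD hvD => ?_⟩
  by_contra! hne
  have hC₁₂ : C₁ ≠ C₂ := fun h => hs.1.tautFree hC₁ _ h₁ (h ▸ h₂)
  have hsub : {D, C₁, C₂} ⊆ F \ W := by
    simp only [insert_subset_iff, singleton_subset_iff]
    exact ⟨hmemW D hD hvD, hmemW C₁ hC₁ (mem_varsC_of_mem h₁), hmemW C₂ hC₂ (mem_varsC_of_mem h₂)⟩
  have := card_le_card hsub
  rw [card_eq_three.2 ⟨D, C₁, C₂, hne.1, hne.2, hC₁₂, rfl⟩] at this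
  omega

/-- If the variable of `y` occurs only in `C₁ ∋ y` and `C₂ ∋ y.comp`, then a literal `x` of
`C₂` missing from `C₁` could be made true together with all clauses but `C₁`, after which
setting `y` true would satisfy `F`. -/
lemma saturatedMU.erase_comp_subset_erase (hs : saturatedMU F) {y : Lit} {C₁ C₂ : Clause}
    (hC₁ : C₁ ∈ F) (hC₂ : C₂ ∈ F) (h₁ : y ∈ C₁) (h₂ : y.comp ∈ C₂)
    (hocc : ∀ D ∈ F, y.1 ∈ varsC D → D = C₁ ∨ D = C₂) : C₂.erase y.comp ⊆ C₁.erase y := by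
  intro x hx
  obtain ⟨hxy, hxC₂⟩ := mem_erase.1 hx
  by_contra hxE
  have hxv : x.1 ≠ y.1 := fun h => by
    obtain rfl | rfl := Lit.eq_or_eq_comp_of_fst_eq h
    exacts [hs.1.tautFree hC₂ _ hxC₂ h₂, hxy rfl]
  have hxC₁ : x ∉ C₁ := fun h => hxE (mem_erase.2 ⟨by rintro rfl; exact hxv rfl, h⟩)
  obtain ⟨a, ha, hxa⟩ := hs.exists_sat_erase hC₁ hxC₁
  refine hs.1.1 ⟨Function.update a y.1 y.2, fun D hD => ?_⟩
  by_cases hD₁ : D = C₁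
  · exact hD₁ ▸ ⟨y, h₁, Lit.eval_update_self a y⟩
  by_cases hD₂ : D = C₂
  · exact hD₂ ▸ ⟨x, hxC₂, by rwa [Lit.eval_update_of_ne hxv]⟩
  have hyD : y.1 ∉ varsC D := fun h => (hocc D hD h).elim hD₁ hD₂
  refine (Clause.sat_congr fun w hw => ?_).2 (ha D (mem_erase.2 ⟨hD₁, hD⟩))
  rw [Function.update_of_ne (by rintro rfl; exact hyD hw)]

theorem saturatedMU.exists_siblings (hs : saturatedMU F) (hdef : #F = #(vars F) + 1)
    (hn : (vars F).Nonempty) :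
    ∃ C w, w ∉ varsC C ∧ insert ((w, true) : Lit) C ∈ F ∧ insert ((w, false) : Lit) C ∈ F := by
  obtain ⟨v, C₁, hC₁, C₂, hC₂, h₁, h₂, hocc⟩ := hs.exists_var_occ_two hdef hn
  have heq : C₁.erase (v, true) = C₂.erase (v, false) := subset_antisymm
    (hs.erase_comp_subset_erase (y := (v, false)) hC₂ hC₁ h₂ h₁ fun D hD h => (hocc D hD h).symm)
    (hs.erase_comp_subset_erase (y := (v, true)) hC₁ hC₂ h₁ h₂ hocc)
  refine ⟨C₁.erase (v, true), v, fun hv => ?_, by rwa [insert_erase h₁],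
    by rwa [heq, insert_erase h₂]⟩
  rcases mem_varsC_iff_or.1 hv with h | h
  · exact (mem_erase.1 h).1 rfl
  · exact hs.1.tautFree hC₁ _ h₁ (mem_erase.1 h).2

end Saturated

def contract (w : ℕ) (C : Clause) (F : ClauseSet) : ClauseSet :=
  insert C ((F.erase (insert (w, true) C)).erase (insert (w, false) C))

def expand (w : ℕ) (C : Clause) (F : ClauseSet) : ClauseSet :=
  insert (insert (w, true) C) (insert (insert (w, false) C) (F.erase C))

lemma Clause.sat_of_sat_insert_of_sat_insert {a : ℕ → Bool} {w : ℕ} {C : Clause}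
    (h₁ : (insert ((w, true) : Lit) C).sat a) (h₂ : (insert ((w, false) : Lit) C).sat a) :
    C.sat a := by
  rcases Clause.sat_insert.1 h₁ with h₁ | h₁ <;> rcases Clause.sat_insert.1 h₂ with h₂ | h₂
  · rw [Lit.eval_eq_true_iff] at h₁ h₂
    simp_all
  all_goals assumption

section Contract

variable {F : ClauseSet} {C : Clause} {w : ℕ}

lemma saturatedMU_contract (hs : saturatedMU F) (h₁ : insert ((w, true) : Lit) C ∈ F)
    (h₂ : insert ((w, false) : Lit) C ∈ F) : saturatedMU (contract w C F) := by
  refine saturatedMU_of_forall_exists_sat_erase (fun ⟨a, ha⟩ => ?_) fun D hD x hx => ?_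
  · obtain ⟨hCa, ha⟩ := satisfies_insert.1 ha
    refine hs.1.1 ⟨a, fun E hE => ?_⟩
    by_cases e₁ : E = insert (w, true) C
    · exact e₁ ▸ hCa.mono (subset_insert _ _)
    by_cases e₂ : E = insert (w, false) C
    · exact e₂ ▸ hCa.mono (subset_insert _ _)
    exact ha E (mem_erase.2 ⟨e₂, mem_erase.2 ⟨e₁, hE⟩⟩)
  rcases mem_insert.1 hD with rfl | hD
  · obtain ⟨E, hE, hxE, hsub⟩ : ∃ E ∈ F, x ∉ E ∧ (contract w D F).erase D ⊆ F.erase E := by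
      by_cases hxw : x = (w, true)
      · refine ⟨_, h₂, by subst hxw; simpa using hx, (erase_insert_subset _ _).trans ?_⟩
        rw [erase_right_comm]
        exact erase_subset _ _
      · exact ⟨_, h₁, by simp [hxw, hx], (erase_insert_subset _ _).trans (erase_subset _ _)⟩
    obtain ⟨a, ha, hxa⟩ := hs.exists_sat_erase hE hxE
    exact ⟨a, ha.mono hsub, hxa⟩
  · obtain ⟨hD₂, hD₁F⟩ := mem_erase.1 hD
    obtain ⟨hD₁, hDF⟩ := mem_erase.1 hD₁F
    obtain ⟨a, ha, hxa⟩ := hs.exists_sat_erase hDF hx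
    refine ⟨a, fun E hE => ?_, hxa⟩
    obtain ⟨hED, hE⟩ := mem_erase.1 hE
    rcases mem_insert.1 hE with rfl | hE
    · exact Clause.sat_of_sat_insert_of_sat_insert (ha _ (mem_erase.2 ⟨Ne.symm hD₁, h₁⟩))
        (ha _ (mem_erase.2 ⟨Ne.symm hD₂, h₂⟩))
    · exact ha E (mem_erase.2 ⟨hED, (mem_erase.1 (mem_erase.1 hE).2).2⟩)

lemma minUnsat.notMem_of_insert_mem (h : minUnsat F) (hw : w ∉ varsC C)
    (h₁ : insert ((w, true) : Lit) C ∈ F) : C ∉ F := fun hC =>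
  hw (mem_varsC_of_mem ((h.eq_of_subset hC h₁ (subset_insert _ _)).symm ▸ mem_insert_self _ _ :
    ((w, true) : Lit) ∈ C))

lemma insert_ne_insert_of_notMem_varsC (hw : w ∉ varsC C) :
    insert ((w, false) : Lit) C ≠ insert (w, true) C := fun he => by
  have : ((w, true) : Lit) ∈ insert ((w, false) : Lit) C := he ▸ mem_insert_self _ _
  exact hw (mem_varsC_of_mem (by simpa using this))

lemma card_contract (h : minUnsat F) (hw : w ∉ varsC C) (h₁ : insert ((w, true) : Lit) C ∈ F)
    (h₂ : insert ((w, false) : Lit) C ∈ F) : #(contract w C F) + 1 = #F := by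
  have hCF := h.notMem_of_insert_mem hw h₁
  have h₁₂ := insert_ne_insert_of_notMem_varsC hw
  rw [contract, card_insert_of_notMem fun h => hCF (mem_of_mem_erase (mem_of_mem_erase h)),
    card_erase_of_mem (mem_erase.2 ⟨h₁₂, h₂⟩), card_erase_of_mem h₁]
  have : 1 < #F := one_lt_card.2 ⟨_, h₁, _, h₂, h₁₂.symm⟩
  omega

lemma expand_contract (h : minUnsat F) (hw : w ∉ varsC C) (h₁ : insert ((w, true) : Lit) C ∈ F)
    (h₂ : insert ((w, false) : Lit) C ∈ F) : expand w C (contract w C F) = F := by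
  have hCF := h.notMem_of_insert_mem hw h₁
  have h₁₂ := insert_ne_insert_of_notMem_varsC hw
  rw [expand, contract, erase_insert fun h => hCF (mem_of_mem_erase (mem_of_mem_erase h)),
    insert_erase (mem_erase.2 ⟨h₁₂, h₂⟩), insert_erase h₁]

/-- Contraction removes exactly the variable `w`: by Tarsi's lemma the contracted set, one clause
smaller, cannot keep all variables. -/
lemma vars_contract (hs : saturatedMU F) (hdef : #F = #(vars F) + 1) (hw : w ∉ varsC C)
    (h₁ : insert ((w, true) : Lit) C ∈ F) (h₂ : insert ((w, false) : Lit) C ∈ F) :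
    vars (contract w C F) = (vars F).erase w := by
  have hsub : vars (contract w C F) ⊆ vars F := by
    intro u hu
    obtain ⟨E, hE, huE⟩ := mem_vars.1 hu
    rcases mem_insert.1 hE with rfl | hE
    · exact varsC_subset_vars h₁ (varsC_mono (subset_insert _ _) huE)
    · exact varsC_subset_vars (mem_of_mem_erase (mem_of_mem_erase hE)) huE
  have hsup : vars F ⊆ insert w (vars (contract w C F)) := by
    intro u hu
    obtain ⟨E, hE, huE⟩ := mem_vars.1 hu
    by_cases hEC : E = insert (w, true) C ∨ E = insert (w, false) C
    · have huC : u = w ∨ u ∈ varsC C := by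
        rcases hEC with rfl | rfl <;> simpa using huE
      rcases huC with rfl | huC
      · exact mem_insert_self _ _
      · exact mem_insert_of_mem (varsC_subset_vars (mem_insert_self _ _) huC)
    · rw [not_or] at hEC
      exact mem_insert_of_mem (varsC_subset_vars
        (mem_insert_of_mem (mem_erase.2 ⟨hEC.2, mem_erase.2 ⟨hEC.1, hE⟩⟩)) huE)
  have hwG : w ∉ vars (contract w C F) := fun hwG => by
    have heq : vars (contract w C F) = vars F :=
      subset_antisymm hsub fun u hu => (mem_insert.1 (hsup hu)).elim (fun h => h ▸ hwG) id
    have := (saturatedMU_contract hs h₁ h₂).1.card_vars_lt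
    have := card_contract hs.1 hw h₁ h₂
    rw [heq] at *
    omega
  ext u
  refine ⟨fun hu => mem_erase.2 ⟨by rintro rfl; exact hwG hu, hsub hu⟩, fun hu => ?_⟩
  obtain ⟨hne, hu⟩ := mem_erase.1 hu
  exact (mem_insert.1 (hsup hu)).resolve_left hne

end Contract

def graft (x : Lit) (G : ClauseSet) : ClauseSet := G.image (insert x)

section Graft

variable {x y : Lit} {C D : Clause} {G G' : ClauseSet}

lemma mem_graft : D ∈ graft x G ↔ ∃ C ∈ G, insert x C = D := mem_image

lemma insert_mem_graft (hC : C ∈ G) : insert x C ∈ graft x G := mem_image_of_mem _ hC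

@[simp] lemma graft_empty : graft x ∅ = ∅ := image_empty _

@[simp] lemma graft_nonempty : (graft x G).Nonempty ↔ G.Nonempty := image_nonempty

lemma graft_mono (h : G ⊆ G') : graft x G ⊆ graft x G' := image_subset_image h

lemma graft_union_comm (x : Lit) (G G' : ClauseSet) :
    graft x G ∪ graft x.comp G' = graft x.comp G' ∪ graft x.comp.comp G := by
  rw [Lit.comp_comp, union_comm]

lemma vars_subset_vars_graft : vars G ⊆ vars (graft x G) := fun v hv => by
  obtain ⟨C, hC, hvC⟩ := mem_vars.1 hv
  exact varsC_subset_vars (insert_mem_graft hC) (by simp [hvC])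

lemma fst_mem_vars_graft (hG : G.Nonempty) : x.1 ∈ vars (graft x G) := by
  obtain ⟨C, hC⟩ := hG
  exact varsC_subset_vars (insert_mem_graft hC) (by simp)

lemma mem_lits_graft : y ∈ lits (graft x G) ↔ (y = x ∧ G.Nonempty) ∨ y ∈ lits G := by
  simp only [mem_lits, mem_graft]
  constructor
  · rintro ⟨_, ⟨C, hC, rfl⟩, hy⟩
    rcases mem_insert.1 hy with rfl | hy
    exacts [Or.inl ⟨rfl, C, hC⟩, Or.inr ⟨C, hC, hy⟩]
  · rintro (⟨rfl, C, hC⟩ | ⟨C, hC, hy⟩)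
    exacts [⟨_, ⟨C, hC, rfl⟩, mem_insert_self _ _⟩, ⟨_, ⟨C, hC, rfl⟩, mem_insert_of_mem hy⟩]

lemma lits_subset_lits_graft : lits G ⊆ lits (graft x G) :=
  fun _ hy => mem_lits_graft.2 (Or.inr hy)

lemma satisfies_graft {a : ℕ → Bool} :
    satisfies a (graft x G) ↔ x.eval a = true ∨ satisfies a G := by
  refine ⟨fun h => or_iff_not_imp_left.2 fun hx C hC => ?_, fun h D hD => ?_⟩
  · exact (Clause.sat_insert.1 (h _ (insert_mem_graft hC))).resolve_left hx
  · obtain ⟨C, hC, rfl⟩ := mem_graft.1 hD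
    exact Clause.sat_insert.2 (h.imp_right fun h => h C hC)

lemma subset_graft_union {T : ClauseSet} (hT : T ⊆ graft x G ∪ graft x.comp G') :
    ∃ H ⊆ G, ∃ H' ⊆ G', T = graft x H ∪ graft x.comp H' := by
  classical
  refine ⟨G.filter (insert x · ∈ T), filter_subset _ _,
    G'.filter (insert x.comp · ∈ T), filter_subset _ _, ext fun E => ⟨fun hE => ?_, fun hE => ?_⟩⟩
  · rcases mem_union.1 (hT hE) with h | h <;> obtain ⟨C, hC, rfl⟩ := mem_graft.1 h
    · exact mem_union_left _ (insert_mem_graft (mem_filter.2 ⟨hC, hE⟩))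
    · exact mem_union_right _ (insert_mem_graft (mem_filter.2 ⟨hC, hE⟩))
  · rcases mem_union.1 hE with h | h <;> obtain ⟨C, hC, rfl⟩ := mem_graft.1 h <;>
      exact (mem_filter.1 hC).2

lemma notMem_of_fst_notMem_vars (hx : x.1 ∉ vars G) (hC : C ∈ G) : x ∉ C :=
  fun h => hx (varsC_subset_vars hC (mem_varsC_of_mem h))

lemma graft_erase (hx : x.1 ∉ vars G) (hC : C ∈ G) :
    graft x (G.erase C) = (graft x G).erase (insert x C) := by
  ext D
  simp only [mem_graft, mem_erase]
  constructor
  · rintro ⟨E, ⟨hEC, hE⟩, rfl⟩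
    refine ⟨fun h => hEC ?_, E, hE, rfl⟩
    rw [← erase_insert (notMem_of_fst_notMem_vars hx hE), h,
      erase_insert (notMem_of_fst_notMem_vars hx hC)]
  · rintro ⟨hne, E, hE, rfl⟩
    exact ⟨E, ⟨by rintro rfl; exact hne rfl, hE⟩, rfl⟩

end Graft

/-- Sets of leaf clauses of a binary tree with distinct variables at the inner nodes, the two
edges below a node carrying `x` and `x.comp`; arbitrary subsets of the leaves are allowed. -/
inductive IsTreeSubset : ClauseSet → Prop
  | empty : IsTreeSubset ∅
  | leaf : IsTreeSubset {∅}
  | node {x : Lit} {G G' : ClauseSet} : x.1 ∉ vars G → x.1 ∉ vars G' → Disjoint (vars G) (vars G') →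
      IsTreeSubset G → IsTreeSubset G' → IsTreeSubset (graft x G ∪ graft x.comp G')

lemma IsTreeSubset.mono {T T' : ClauseSet} (hT : IsTreeSubset T) (h : T' ⊆ T) :
    IsTreeSubset T' := by
  induction hT generalizing T' with
  | empty => rw [subset_empty.1 h]; exact .empty
  | leaf => rcases subset_singleton_iff.1 h with rfl | rfl; exacts [.empty, .leaf]
  | node hxG hxG' hdisj _ _ ih ih' =>
    obtain ⟨H, hH, H', hH', rfl⟩ := subset_graft_union h
    exact .node (fun h => hxG (vars_mono hH h)) (fun h => hxG' (vars_mono hH' h))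
      (hdisj.mono (vars_mono hH) (vars_mono hH')) (ih hH) (ih' hH')

section Expand

variable {w : ℕ} {x : Lit} {C : Clause} {G G' : ClauseSet}

lemma vars_expand_subset (hC : C ∈ G) : vars (expand w C G) ⊆ insert w (vars G) := by
  intro v hv
  obtain ⟨D, hD, hvD⟩ := mem_vars.1 hv
  simp only [expand, mem_insert] at hD
  rcases hD with rfl | rfl | hD <;> simp only [varsC_insert, mem_insert] at hvD ⊢
  · exact hvD.imp_right (varsC_subset_vars hC ·)
  · exact hvD.imp_right (varsC_subset_vars hC ·)
  · exact Or.inr (varsC_subset_vars (mem_of_mem_erase hD) hvD)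

lemma graft_expand (hx : x.1 ∉ vars G) (hC : C ∈ G) :
    graft x (expand w C G) = expand w (insert x C) (graft x G) := by
  simp only [expand, graft, image_insert]
  rw [← graft, graft_erase hx hC, insert_comm x, insert_comm x]
  rfl

lemma expand_union {A B : ClauseSet} (hC : C ∉ B) : expand w C (A ∪ B) = expand w C A ∪ B := by
  rw [expand, expand, erase_union_distrib, erase_eq_of_notMem hC, insert_union, insert_union]

lemma IsTreeSubset.expand_node (hxG : x.1 ∉ vars G) (hxG' : x.1 ∉ vars G')
    (hdisj : Disjoint (vars G) (vars G')) (hG' : IsTreeSubset G')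
    (ih : ∀ C ∈ G, w ∉ vars G → IsTreeSubset (expand w C G)) (hC : C ∈ graft x G)
    (hw : w ∉ vars (graft x G ∪ graft x.comp G')) :
    IsTreeSubset (expand w C (graft x G ∪ graft x.comp G')) := by
  obtain ⟨C₀, hC₀, rfl⟩ := mem_graft.1 hC
  rw [vars_union, mem_union, not_or] at hw
  have hwG : w ∉ vars G := fun h => hw.1 (vars_subset_vars_graft h)
  have hwG' : w ∉ vars G' := fun h => hw.2 (vars_subset_vars_graft h)
  have hwx : w ≠ x.1 := by rintro rfl; exact hw.1 (fst_mem_vars_graft ⟨C₀, hC₀⟩)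
  have hCG' : insert x C₀ ∉ graft x.comp G' := fun h => by
    obtain ⟨E, hE, hEC⟩ := mem_graft.1 h
    have : x.comp ∈ insert x C₀ := hEC ▸ mem_insert_self _ _
    rcases mem_insert.1 this with h | h
    · exact x.comp_ne_self h
    · exact hxG (varsC_subset_vars hC₀ (by simpa using mem_varsC_of_mem h))
  have hsub := vars_expand_subset (w := w) hC₀
  rw [expand_union hCG', ← graft_expand hxG hC₀]
  refine .node (fun h => ?_) hxG' ?_ (ih C₀ hC₀ hwG) hG'
  · rcases mem_insert.1 (hsub h) with h | h
    exacts [hwx h.symm, hxG h]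
  · exact Disjoint.mono_left hsub (disjoint_insert_left.2 ⟨hwG', hdisj⟩)

lemma IsTreeSubset.expand {T : ClauseSet} (hT : IsTreeSubset T) (hC : C ∈ T) (hw : w ∉ vars T) :
    IsTreeSubset (expand w C T) := by
  induction hT generalizing C with
  | empty => simp at hC
  | leaf =>
    obtain rfl := mem_singleton.1 hC
    have : expand w ∅ {∅} = graft (w, true) {∅} ∪ graft (Lit.comp (w, true)) {∅} := by
      simp [expand, graft]
      rfl
    rw [this]
    exact .node (by simp [vars, varsC]) (by simp [vars, varsC]) (by simp [vars, varsC]) .leaf .leaf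
  | node hxG hxG' hdisj hG hG' ih ih' =>
    rcases mem_union.1 hC with hC | hC
    · exact expand_node hxG hxG' hdisj hG' (fun C hC hw => ih hC hw) hC hw
    · rw [graft_union_comm] at hw ⊢
      exact expand_node (by simpa) (by simpa) hdisj.symm hG (fun C hC hw => ih' hC hw) hC hw

end Expand

theorem saturatedMU.isTreeSubset {F : ClauseSet} (hs : saturatedMU F)
    (hdef : #F = #(vars F) + 1) : IsTreeSubset F := by
  induction hn : #(vars F) using Nat.strong_induction_on generalizing F with
  | _ n ih =>
    rcases (vars F).eq_empty_or_nonempty with hv | hv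
    · rw [hv, card_empty] at hdef
      obtain ⟨C, rfl⟩ := card_eq_one.1 hdef
      obtain rfl : C = ∅ := eq_empty_of_forall_notMem fun x hx => by
        simpa [hv] using varsC_subset_vars (mem_singleton_self C) (mem_varsC_of_mem hx)
      exact .leaf
    · obtain ⟨C, w, hw, h₁, h₂⟩ := hs.exists_siblings hdef hv
      have hvars := vars_contract hs hdef hw h₁ h₂
      have hwF : w ∈ vars F := varsC_subset_vars h₁ (by simp)
      have hcard := card_contract hs.1 hw h₁ h₂
      have hvc : #(vars (contract w C F)) + 1 = #(vars F) := by rw [hvars, card_erase_add_one hwF]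
      have hG := ih _ (by omega) (saturatedMU_contract hs h₁ h₂) (by omega) rfl
      rw [← expand_contract hs.1 hw h₁ h₂]
      exact hG.expand (mem_insert_self _ _) (by rw [hvars]; exact notMem_erase _ _)

@[simp] lemma pureC_empty : pureC ∅ = ∅ := rfl

@[simp] lemma pureC_singleton_empty : pureC {∅} = ∅ := by
  simp [pureC, lits]

section Node

variable {x y : Lit} {G G' : ClauseSet}

lemma mem_pureC_node (hy : y ∈ pureC (graft x G ∪ graft x.comp G')) :
    (y = x ∧ G' = ∅) ∨ (y = x.comp ∧ G = ∅) ∨ y ∈ pureC G ∨ y ∈ pureC G' := by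
  simp only [mem_pureC, lits_union, mem_union, mem_lits_graft, not_or, not_and,
    not_nonempty_iff_eq_empty] at hy
  obtain ⟨hy, ⟨hxG, hcG⟩, ⟨hxG', hcG'⟩⟩ := hy
  rcases hy with ((⟨rfl, -⟩ | hy) | (⟨rfl, -⟩ | hy))
  · exact Or.inl ⟨rfl, hxG' rfl⟩
  · exact Or.inr (Or.inr (Or.inl (mem_pureC.2 ⟨hy, hcG⟩)))
  · exact Or.inr (Or.inl ⟨rfl, hxG (by simp)⟩)
  · exact Or.inr (Or.inr (Or.inr (mem_pureC.2 ⟨hy, hcG'⟩)))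

lemma pureC_subset_pureC_node (hxG : x.1 ∉ vars G) (hdisj : Disjoint (vars G) (vars G')) :
    pureC G ⊆ pureC (graft x G ∪ graft x.comp G') := by
  intro y hy
  obtain ⟨hyG, hcG⟩ := mem_pureC.1 hy
  have hyv := fst_mem_vars_of_mem_lits hyG
  rw [mem_pureC, lits_union]
  refine ⟨mem_union_left _ (lits_subset_lits_graft hyG), fun h => ?_⟩
  rcases mem_union.1 h with h | h <;> rcases mem_lits_graft.1 h with ⟨h, -⟩ | h
  · exact hxG (by simpa [← h] using hyv)
  · exact hcG h
  · exact hxG (by simpa [Lit.comp, Prod.ext_iff] using congrArg Prod.fst h ▸ hyv)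
  · exact disjoint_left.1 hdisj hyv (by simpa using fst_mem_vars_of_mem_lits h)

lemma comp_mem_pureC_node (hxG' : x.1 ∉ vars G') (hG' : G'.Nonempty) :
    x.comp ∈ pureC (graft x ∅ ∪ graft x.comp G') := by
  simp only [graft_empty, empty_union, mem_pureC, mem_lits_graft, Lit.comp_comp]
  refine ⟨Or.inl ⟨trivial, hG'⟩, ?_⟩
  rintro (⟨h, -⟩ | h)
  · exact x.comp_ne_self h.symm
  · exact hxG' (fst_mem_vars_of_mem_lits h)

lemma comp_notMem_pureC_node (hG : G.Nonempty) :
    x.comp ∉ pureC (graft x G ∪ graft x.comp G') := fun h =>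
  (mem_pureC.1 h).2 (by simpa [lits_union] using Or.inl (mem_lits_graft.2 (Or.inl ⟨rfl, hG⟩)))

lemma sat_pureC_node (hxG : x.1 ∉ vars G) (hxG' : x.1 ∉ vars G')
    (hdisj : Disjoint (vars G) (vars G')) (ih : G.Nonempty → entails G (pureC G))
    (hne : (graft x G ∪ graft x.comp G').Nonempty) {a : ℕ → Bool}
    (ha : satisfies a (graft x G ∪ graft x.comp G')) (hx : x.eval a = false) :
    (pureC (graft x G ∪ graft x.comp G')).sat a := by
  have haG : satisfies a G :=
    (satisfies_graft.1 (satisfies_union.1 ha).1).resolve_left (by simp [hx])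
  rcases G.eq_empty_or_nonempty with rfl | hG
  · have hG' : G'.Nonempty := by simpa using hne
    exact ⟨x.comp, comp_mem_pureC_node hxG' hG', by simp [hx]⟩
  · exact (ih hG a haG).mono (pureC_subset_pureC_node hxG hdisj)

/-- If `x.comp ∉ Q`, falsify `x` and extend a countermodel of `G ⊨ Q|vars G` by the falsifier of
`Q` to a countermodel of the node. -/
lemma entails_filter_of_entails_node {Q : Clause} (hxG : x.1 ∉ vars G) (hQ : tautFree Q)
    (hxQ : x.comp ∉ Q) (h : entails (graft x G ∪ graft x.comp G') Q) :
    entails G (Q.filter (·.1 ∈ vars G)) := by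
  intro b hb
  by_contra hno
  let a : ℕ → Bool := fun u => if u = x.1 then !x.2 else if u ∈ vars G then b u else Q.falsifier u
  have hxa : x.eval a = false := Lit.eval_eq_false_iff.2 (by simp [a])
  have haG : satisfies a G := (satisfies_congr fun u hu => by
    simp [a, hu, show u ≠ x.1 by rintro rfl; exact hxG hu]).2 hb
  obtain ⟨y, hyQ, hya⟩ := h a <| satisfies_union.2
    ⟨satisfies_graft.2 (Or.inr haG), satisfies_graft.2 (Or.inl (by simp [hxa]))⟩
  by_cases hyx : y.1 = x.1
  · obtain rfl | rfl := Lit.eq_or_eq_comp_of_fst_eq hyx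
    exacts [Bool.false_ne_true (hxa ▸ hya), hxQ hyQ]
  by_cases hyG : y.1 ∈ vars G
  · rw [Lit.eval_congr (show a y.1 = b y.1 by simp [a, hyx, hyG])] at hya
    exact hno ⟨y, mem_filter.2 ⟨hyQ, hyG⟩, hya⟩
  · rw [Lit.eval_congr (show a y.1 = Q.falsifier y.1 by simp [a, hyx, hyG]),
      Clause.eval_falsifier hQ hyQ] at hya
    exact Bool.false_ne_true hya

lemma exists_pureC_subset_of_entails_node {Q : Clause} (hxG : x.1 ∉ vars G) (hQ : tautFree Q)
    (ih : ∀ Q, tautFree Q → entails G Q → ∃ H ⊆ G, H.Nonempty ∧ pureC H ⊆ Q)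
    (h : entails (graft x G ∪ graft x.comp G') Q) :
    ∃ H ⊆ G, pureC H ⊆ Q ∧ (x.comp ∉ Q → H.Nonempty) := by
  by_cases hxQ : x.comp ∈ Q
  · exact ⟨∅, empty_subset _, by simp, fun h => absurd hxQ h⟩
  · obtain ⟨H, hHG, hH, hHQ⟩ := ih _ (hQ.mono (filter_subset _ _))
      (entails_filter_of_entails_node hxG hQ hxQ h)
    exact ⟨H, hHG, hHQ.trans (filter_subset _ _), fun _ => hH⟩

lemma eq_of_pureC_subset_node {H H' : ClauseSet} (hxG : x.1 ∉ vars G) (hxG' : x.1 ∉ vars G')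
    (hdisj : Disjoint (vars G) (vars G'))
    (ih : ∀ H ⊆ G, H.Nonempty → pureC H ⊆ pureC G → H = G) (hH : H ⊆ G) (hH' : H' ⊆ G')
    (hne : (graft x H ∪ graft x.comp H').Nonempty)
    (hpure : pureC (graft x H ∪ graft x.comp H') ⊆ pureC (graft x G ∪ graft x.comp G')) :
    H = G := by
  rcases G.eq_empty_or_nonempty with rfl | hG
  · exact subset_empty.1 hH
  rcases H.eq_empty_or_nonempty with rfl | hHne
  · have hH'ne : H'.Nonempty := by simpa using hne
    exact absurd (hpure (comp_mem_pureC_node (fun h => hxG' (vars_mono hH' h)) hH'ne))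
      (comp_notMem_pureC_node hG)
  refine ih H hH hHne fun y hy => ?_
  have hyN := mem_pureC.1 <| hpure <|
    pureC_subset_pureC_node (fun h => hxG (vars_mono hH h))
      (hdisj.mono (vars_mono hH) (vars_mono hH')) hy
  rw [lits_union] at hyN
  exact mem_pureC.2 ⟨lits_mono hH (mem_pureC.1 hy).1,
    fun h => hyN.2 (mem_union_left _ (lits_subset_lits_graft h))⟩

end Node

namespace IsTreeSubset

variable {T : ClauseSet}

/-- The path of an assignment satisfying `T` ends at a leaf outside `T`; where it leaves the last
subtree containing leaves of `T`, the literal of the edge not taken is pure in `T` and true. -/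
lemma entails_pureC (hT : IsTreeSubset T) (hne : T.Nonempty) : entails T (pureC T) := by
  induction hT with
  | empty => simp at hne
  | leaf => exact fun a ha => absurd (ha ∅ (mem_singleton_self _)) (by simp [Clause.sat])
  | @node x G G' hxG hxG' hdisj _ _ ih ih' =>
    intro a ha
    cases hx : x.eval a
    · exact sat_pureC_node hxG hxG' hdisj ih hne ha hx
    · rw [graft_union_comm] at ha hne ⊢
      exact sat_pureC_node (by simpa) (by simpa) hdisj.symm ih' hne ha (by simp [hx])

lemma exists_pureC_subset_of_entails (hT : IsTreeSubset T) {Q : Clause} (hQ : tautFree Q)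
    (h : entails T Q) : ∃ T' ⊆ T, T'.Nonempty ∧ pureC T' ⊆ Q := by
  induction hT generalizing Q with
  | empty => exact absurd h (not_entails_empty hQ)
  | leaf => exact ⟨{∅}, subset_rfl, singleton_nonempty _, by simp⟩
  | @node x G G' hxG hxG' _ _ _ ih ih' =>
    obtain ⟨H, hHG, hHQ, hH⟩ := exists_pureC_subset_of_entails_node hxG hQ (fun _ => ih) h
    obtain ⟨H', hH'G', hH'Q, hH'⟩ := exists_pureC_subset_of_entails_node (x := x.comp)
      (by simpa) hQ (fun _ => ih') (graft_union_comm x G G' ▸ h)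
    refine ⟨graft x H ∪ graft x.comp H', union_subset_union (graft_mono hHG) (graft_mono hH'G'),
      ?_, fun y hy => ?_⟩
    · by_cases hxQ : x.comp ∈ Q
      · have : x ∉ Q := by simpa using hQ _ hxQ
        simp [hH' (by simpa using this)]
      · simp [hH hxQ]
    · rcases mem_pureC_node hy with ⟨rfl, hH'e⟩ | ⟨rfl, hHe⟩ | hy | hy
      · by_contra hyQ
        exact (hH' (by simpa using hyQ)).ne_empty hH'e
      · by_contra hyQ
        exact (hH hyQ).ne_empty hHe
      · exact hHQ hy
      · exact hH'Q hy

lemma eq_of_pureC_subset (hT : IsTreeSubset T) {T' : ClauseSet} (hT' : T' ⊆ T)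
    (hne : T'.Nonempty) (hpure : pureC T' ⊆ pureC T) : T' = T := by
  induction hT generalizing T' with
  | empty => exact subset_empty.1 hT'
  | leaf => exact (subset_singleton_iff.1 hT').resolve_left hne.ne_empty
  | @node x G G' hxG hxG' hdisj _ _ ih ih' =>
    obtain ⟨H, hH, H', hH', rfl⟩ := subset_graft_union hT'
    have hHG := eq_of_pureC_subset_node hxG hxG' hdisj (fun H hH => ih hH) hH hH' hne hpure
    rw [graft_union_comm x H] at hne hpure
    rw [graft_union_comm x G] at hpure
    have hH'G' := eq_of_pureC_subset_node (by simpa) (by simpa) hdisj.symm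
      (fun H hH => ih' hH) hH' hH hne hpure
    rw [hHG, hH'G']

end IsTreeSubset

section Doping

variable {u : Clause → ℕ} {F F' : ClauseSet} {P : Clause}

lemma mem_dope {D : Clause} : D ∈ dope u F ↔ ∃ C ∈ F, insert ((u C, true) : Lit) C = D :=
  mem_image

lemma mem_lits_dope {x : Lit} :
    x ∈ lits (dope u F) ↔ (∃ C ∈ F, ((u C, true) : Lit) = x) ∨ x ∈ lits F := by
  simp only [mem_lits, mem_dope]
  constructor
  · rintro ⟨_, ⟨C, hC, rfl⟩, hx⟩
    rcases mem_insert.1 hx with rfl | hx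
    exacts [Or.inl ⟨C, hC, rfl⟩, Or.inr ⟨C, hC, hx⟩]
  · rintro (⟨C, hC, rfl⟩ | ⟨C, hC, hx⟩)
    exacts [⟨_, ⟨C, hC, rfl⟩, mem_insert_self _ _⟩, ⟨_, ⟨C, hC, rfl⟩, mem_insert_of_mem hx⟩]

/-- An assignment falsifying `P` falsifies the doping literals in `P`, so on `D(F)` it must
satisfy the clauses carrying them; conversely a countermodel over `vars F` extends, by the
falsifier of `P` on the doping variables, to a countermodel of `D(F) ⊨ P`. -/
lemma entails_dope_iff (hu : ∀ C ∈ F, u C ∉ vars F) (hP : tautFree P) :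
    entails (dope u F) P ↔
      entails (F.filter fun C => ((u C, true) : Lit) ∈ P) (P.filter (·.1 ∈ vars F)) := by
  constructor
  · intro h b hb
    by_contra hno
    let a : ℕ → Bool := fun v => if v ∈ vars F then b v else P.falsifier v
    have ha : satisfies a (dope u F) := by
      intro D hD
      obtain ⟨C, hC, rfl⟩ := mem_dope.1 hD
      by_cases hCP : ((u C, true) : Lit) ∈ P
      · refine ((Clause.sat_congr fun v hv => ?_).2 (hb C (mem_filter.2 ⟨hC, hCP⟩))).mono
          (subset_insert _ _)
        exact if_pos (varsC_subset_vars hC hv)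
      · exact Clause.sat_insert.2 (Or.inl (Lit.eval_eq_true_iff.2 (by
          simp [a, hu C hC, Clause.falsifier, hCP])))
    obtain ⟨y, hyP, hya⟩ := h a ha
    by_cases hyF : y.1 ∈ vars F
    · rw [Lit.eval_congr (show a y.1 = b y.1 from if_pos hyF)] at hya
      exact hno ⟨y, mem_filter.2 ⟨hyP, hyF⟩, hya⟩
    · rw [Lit.eval_congr (show a y.1 = P.falsifier y.1 from if_neg hyF),
        Clause.eval_falsifier hP hyP] at hya
      exact Bool.false_ne_true hya
  · intro h a ha
    by_contra hno
    refine hno ((h a fun C hC => ?_).mono (filter_subset _ _))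
    obtain ⟨hCF, hCP⟩ := mem_filter.1 hC
    exact (Clause.sat_insert.1 (ha _ (mem_dope.2 ⟨C, hCF, rfl⟩))).resolve_left
      fun hCa => hno ⟨_, hCP, hCa⟩

lemma pureC_dope (hu : ∀ C ∈ F, u C ∉ vars F) :
    pureC (dope u F) = F.image (fun C => ((u C, true) : Lit)) ∪ pureC F := by
  ext x
  simp only [mem_pureC, mem_union, mem_image, mem_lits_dope]
  constructor
  · rintro ⟨hC | hx, hc⟩
    exacts [Or.inl hC, Or.inr ⟨hx, fun h => hc (Or.inr h)⟩]
  · rintro (⟨C, hC, rfl⟩ | ⟨hx, hc⟩)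
    · refine ⟨Or.inl ⟨C, hC, rfl⟩, ?_⟩
      rintro (⟨C', -, h⟩ | h)
      · simp [Lit.comp] at h
      · exact hu C hC (fst_mem_vars_of_mem_lits h)
    · refine ⟨Or.inr hx, ?_⟩
      rintro (⟨C', hC', h⟩ | h)
      · have hux : u C' = x.1 := congrArg Prod.fst h
        exact hu C' hC' (hux ▸ fst_mem_vars_of_mem_lits hx)
      · exact hc h

lemma freshDoping.of_subset (hu : freshDoping u F) (hF' : F' ⊆ F) : ∀ C ∈ F', u C ∉ vars F' :=
  fun C hC h => hu.1 C (hF' hC) (vars_mono hF' h)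

lemma filter_mem_pureC_dope (hu : freshDoping u F) (hF' : F' ⊆ F) :
    F.filter (fun C => ((u C, true) : Lit) ∈ pureC (dope u F')) = F' := by
  ext C
  rw [mem_filter, pureC_dope (hu.of_subset hF'), mem_union, mem_image]
  constructor
  · rintro ⟨hC, ⟨C', hC', he⟩ | hp⟩
    · rwa [← hu.2 (hF' hC') hC (congrArg Prod.fst he)]
    · exact absurd (vars_mono hF' (fst_mem_vars_of_mem_lits (mem_pureC.1 hp).1)) (hu.1 C hC)
  · exact fun hC => ⟨hF' hC, Or.inl ⟨C, hC, rfl⟩⟩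

lemma filter_pureC_dope (hu : freshDoping u F) (hF' : F' ⊆ F) :
    (pureC (dope u F')).filter (·.1 ∈ vars F) = pureC F' := by
  ext y
  rw [mem_filter, pureC_dope (hu.of_subset hF'), mem_union, mem_image]
  constructor
  · rintro ⟨⟨C, hC, rfl⟩ | hy, hyF⟩
    exacts [absurd hyF (hu.1 C (hF' hC)), hy]
  · exact fun hy => ⟨Or.inr hy, vars_mono hF' (fst_mem_vars_of_mem_lits (mem_pureC.1 hy).1)⟩

lemma entails_dope_pureC_dope (hT : IsTreeSubset F) (hu : freshDoping u F) (hF' : F' ⊆ F)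
    (hne : F'.Nonempty) : entails (dope u F) (pureC (dope u F')) := by
  rw [entails_dope_iff hu.1 (pureC_tautFree _), filter_mem_pureC_dope hu hF',
    filter_pureC_dope hu hF']
  exact (hT.mono hF').entails_pureC hne

lemma exists_eq_pureC_dope_of_primeImp (hT : IsTreeSubset F) (hu : freshDoping u F)
    (hP : primeImp (dope u F) P) : ∃ F' ⊆ F, F'.Nonempty ∧ pureC (dope u F') = P := by
  obtain ⟨hPt, hPe, hPmin⟩ := hP
  obtain ⟨F', hF'P, hne, hpure⟩ := (hT.mono (filter_subset _ _)).exists_pureC_subset_of_entails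
    (hPt.mono (filter_subset _ _)) ((entails_dope_iff hu.1 hPt).1 hPe)
  have hF' : F' ⊆ F := hF'P.trans (filter_subset _ _)
  have hsub : pureC (dope u F') ⊆ P := by
    rw [pureC_dope (hu.of_subset hF')]
    refine union_subset (fun y hy => ?_) (hpure.trans (filter_subset _ _))
    obtain ⟨C, hC, rfl⟩ := mem_image.1 hy
    exact (mem_filter.1 (hF'P hC)).2
  refine ⟨F', hF', hne, by_contra fun hne' => ?_⟩
  exact hPmin _ (Finset.ssubset_iff_subset_ne.2 ⟨hsub, hne'⟩)
    (entails_dope_pureC_dope hT hu hF' hne)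

/-- A proper subclause `P'` entailed by `D(F)` yields a nonempty `T' ⊆ F'` with pure literals in
`pureC F'`; by incomparability `T' = F'`, which forces `P'` to contain all of the clause. -/
lemma primeImp_pureC_dope (hT : IsTreeSubset F) (hu : freshDoping u F) (hF' : F' ⊆ F)
    (hne : F'.Nonempty) : primeImp (dope u F) (pureC (dope u F')) := by
  refine ⟨pureC_tautFree _, entails_dope_pureC_dope hT hu hF' hne, fun P' hP' hP'e => ?_⟩
  have hP't := (pureC_tautFree _).mono hP'.1
  obtain ⟨T', hT'P', hne', hpure⟩ := (hT.mono (filter_subset _ _)).exists_pureC_subset_of_entails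
    (hP't.mono (filter_subset _ _)) ((entails_dope_iff hu.1 hP't).1 hP'e)
  have hP'F' : F.filter (fun C => ((u C, true) : Lit) ∈ P') ⊆ F' := fun C hC => by
    rw [← filter_mem_pureC_dope hu hF']
    exact mem_filter.2 ⟨(mem_filter.1 hC).1, hP'.1 (mem_filter.1 hC).2⟩
  have hP'pure : P'.filter (·.1 ∈ vars F) ⊆ pureC F' := by
    rw [← filter_pureC_dope hu hF']
    exact filter_subset_filter _ hP'.1
  obtain rfl := (hT.mono hF').eq_of_pureC_subset (hT'P'.trans hP'F') hne' (hpure.trans hP'pure)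
  refine hP'.2 ?_
  rw [pureC_dope (hu.of_subset hF')]
  refine union_subset (fun y hy => ?_) (hpure.trans (filter_subset _ _))
  obtain ⟨C, hC, rfl⟩ := mem_image.1 hy
  exact (mem_filter.1 (hT'P' hC)).2

lemma primeSet_dope (hT : IsTreeSubset F) (hu : freshDoping u F) :
    primeSet (dope u F) =
      (fun F' => pureC (dope u F')) '' {F' : ClauseSet | F' ⊆ F ∧ F'.Nonempty} := by
  ext P
  refine ⟨fun hP => ?_, ?_⟩
  · obtain ⟨F', hF', hne, rfl⟩ := exists_eq_pureC_dope_of_primeImp hT hu hP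
    exact ⟨F', ⟨hF', hne⟩, rfl⟩
  · rintro ⟨F', ⟨hF', hne⟩, rfl⟩
    exact primeImp_pureC_dope hT hu hF' hne

lemma injOn_pureC_dope (hu : freshDoping u F) :
    Set.InjOn (fun F' => pureC (dope u F')) {F' | F' ⊆ F} := fun F₁ h₁ F₂ h₂ he => by
  rw [← filter_mem_pureC_dope hu h₁, ← filter_mem_pureC_dope hu h₂]
  simp only at he
  rw [he]

end Doping

/-- For F saturated minimally unsatisfiable of deficiency 1, D(F) has exactly
2^{c(F)} - 1 prime implicates, namely { pure(D(F')) : ∅ ≠ F' ⊆ F }. -/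
theorem dope_smu1_primeImplicates (F : ClauseSet) (u : Clause → ℕ)
    (hsmu : saturatedMU F) (hdef : F.card = (vars F).card + 1)
    (hu : freshDoping u F) :
    primeSet (dope u F) =
        (fun F' => pureC (dope u F')) '' {F' : ClauseSet | F' ⊆ F ∧ F'.Nonempty} ∧
      (primeSet (dope u F)).ncard = 2 ^ F.card - 1 := by
  have hprime := primeSet_dope (hsmu.isTreeSubset hdef) hu
  have hsubsets : {F' : ClauseSet | F' ⊆ F ∧ F'.Nonempty} = ↑(F.powerset.erase ∅) := by
    ext
    simp [nonempty_iff_ne_empty, and_comm]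
  refine ⟨hprime, ?_⟩
  rw [hprime, ((injOn_pureC_dope hu).mono fun _ h => h.1).ncard_image, hsubsets,
    Set.ncard_coe_finset, card_erase_of_mem (empty_mem_powerset F), card_powerset]
end

section
/- Let T be a full binary tree in which every leaf has depth at least k+1, F = smu1(T) the associated SMU(δ=1) clause-set, and V₀, V₁ nonempty depth-k-incomparable sets of leaves of T. Then the hyperedges E^k_{C_{V₀}} and E^k_{C_{V₁}} of the trigger hypergraph T_k(D(F)) are disjoint. -/
/-- Variable-labelled full binary trees (labels on inner nodes). -/
inductive LTree where
  | leaf : LTree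
  | node : ℕ → LTree → LTree → LTree

def LTree.vars : LTree → Finset ℕ
  | .leaf => ∅
  | .node v t1 t2 => insert v (t1.vars ∪ t2.vars)

/-- All inner-node labels are distinct. -/
def LTree.distinct : LTree → Prop
  | .leaf => True
  | .node v t1 t2 =>
      v ∉ t1.vars ∧ v ∉ t2.vars ∧ Disjoint t1.vars t2.vars ∧ t1.distinct ∧ t2.distinct

def LTree.hs : LTree → ℕ
  | .leaf => 0
  | .node _ t1 t2 => if t1.hs = t2.hs then t1.hs + 1 else max t1.hs t2.hs

def LTree.minDepth : LTree → ℕ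
  | .leaf => 0
  | .node _ t1 t2 => 1 + min t1.minDepth t2.minDepth

/-- Leaf clauses (edge literals from the root, accumulated in `C`). -/
def LTree.clausesAux : LTree → Clause → ClauseSet
  | .leaf, C => {C}
  | .node v t1 t2, C =>
      t1.clausesAux (insert ((v, true) : Lit) C) ∪ t2.clausesAux (insert ((v, false) : Lit) C)

/-- The SMU(δ=1) clause-set associated to a labelled tree. -/
def smu1 (T : LTree) : ClauseSet := T.clausesAux ∅

/-- The clause-sets of leaves of the subtrees rooted at depth exactly k. -/
def LTree.depthClauses : ℕ → LTree → Clause → Finset ClauseSet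
  | 0, t, C => {t.clausesAux C}
  | _ + 1, .leaf, _ => ∅
  | k + 1, .node v t1 t2, C =>
      t1.depthClauses k (insert ((v, true) : Lit) C) ∪
        t2.depthClauses k (insert ((v, false) : Lit) C)


section Aux

lemma mem_dope_iff {u : Clause → ℕ} {G : ClauseSet} {K : Clause} :
    K ∈ dope u G ↔ ∃ K0 ∈ G, K = insert ((u K0, true) : Lit) K0 := by
  unfold dope; simp only [Finset.mem_image]; tauto

lemma mem_lits_iff {G : ClauseSet} {x : Lit} : x ∈ lits G ↔ ∃ K ∈ G, x ∈ K := by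
  unfold lits; simp [Finset.mem_sup]

lemma mem_lits_dope_iff {u : Clause → ℕ} {G : ClauseSet} {x : Lit} :
    x ∈ lits (dope u G) ↔ ∃ K ∈ G, x = ((u K, true) : Lit) ∨ x ∈ K := by
  rw [mem_lits_iff]
  constructor
  · rintro ⟨K, hK, hx⟩
    obtain ⟨K0, hK0, rfl⟩ := mem_dope_iff.mp hK
    rcases Finset.mem_insert.mp hx with h | h
    · exact ⟨K0, hK0, Or.inl h⟩
    · exact ⟨K0, hK0, Or.inr h⟩
  · rintro ⟨K, hK, h | h⟩
    · exact ⟨_, mem_dope_iff.mpr ⟨K, hK, rfl⟩, by simp [h]⟩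
    · exact ⟨_, mem_dope_iff.mpr ⟨K, hK, rfl⟩, Finset.mem_insert_of_mem h⟩

lemma mem_pureC_iff {G : ClauseSet} {x : Lit} :
    x ∈ pureC G ↔ x ∈ lits G ∧ Lit.comp x ∉ lits G := by
  unfold pureC; simp [Finset.mem_filter]

lemma fst_mem_vars {G : ClauseSet} {K : Clause} {y : Lit} (hy : y ∈ K) (hK : K ∈ G) :
    y.1 ∈ vars G := by
  unfold vars
  rw [Finset.mem_sup]
  exact ⟨K, hK, Finset.mem_image_of_mem _ hy⟩

lemma comp_pair (v : ℕ) (b : Bool) : Lit.comp ((v, b) : Lit) = ((v, !b) : Lit) := rfl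

end Aux

section Semantic

lemma lit_cases (z : Lit) (v : ℕ) (b : Bool) (h : z.1 = v) :
    z = ((v, b) : Lit) ∨ z = ((v, !b) : Lit) := by
  rcases z with ⟨zv, zb⟩
  cases zb <;> cases b <;> simp_all

lemma eval_true_of_ne_false {a : ℕ → Bool} {z : Lit} (h : Lit.eval a z ≠ true) :
    Lit.eval a z = false := by cases hv : Lit.eval a z <;> simp_all

lemma mem_lits_of_prime {D : ClauseSet} {C' : Clause} (hC' : primeImp D C')
    {y : Lit} (hy : y ∈ C') : y ∈ lits D := by
  by_contra h
  have hne := hC'.2.2 _ (Finset.erase_ssubset hy)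
  rw [entails] at hne; push_neg at hne
  obtain ⟨a, ha, hnsat⟩ := hne
  have hfalse : ∀ z ∈ C', z ≠ y → Lit.eval a z = false := by
    intro z hz hzy
    refine eval_true_of_ne_false (fun hzt => hnsat ?_)
    exact ⟨z, Finset.mem_erase.mpr ⟨hzy, hz⟩, hzt⟩
  set a' : ℕ → Bool := fun m => if m = y.1 then !y.2 else a m with ha'
  have hyf : Lit.eval a' y = false := by
    rcases y with ⟨yv, yb⟩; cases yb <;> simp [Lit.eval, ha']
  have hsat' : satisfies a' D := by
    intro K hK
    obtain ⟨z, hz, hzt⟩ := ha K hK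
    by_cases hz1 : z.1 = y.1
    · rcases lit_cases z y.1 y.2 hz1 with rfl | rfl
      · exact absurd (mem_lits_iff.mpr ⟨K, hK, hz⟩) h
      · -- z = comp y ; but eval a y = true so eval a z = false, contradiction
        exfalso
        obtain ⟨w, hw, hwt⟩ := hC'.2.1 a ha
        have hwy : w = y := by
          by_contra hne2
          rw [hfalse w hw hne2] at hwt; simp at hwt
        subst hwy
        rcases w with ⟨yv, yb⟩
        cases yb <;> simp_all [Lit.eval]
    · refine ⟨z, hz, ?_⟩
      rw [← hzt]
      rcases z with ⟨zv, zb⟩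
      simp only at hz1
      simp [Lit.eval, ha', hz1]
  obtain ⟨z, hz, hzt⟩ := hC'.2.1 a' hsat'
  by_cases hz1 : z.1 = y.1
  · rcases lit_cases z y.1 y.2 hz1 with rfl | rfl
    · rw [hyf] at hzt; simp at hzt
    · exact hC'.1 y hy (by simpa [Lit.comp] using hz)
  · have := hfalse z hz (fun hzy => hz1 (by rw [hzy]))
    rcases z with ⟨zv, zb⟩
    simp only at hz1
    simp only [Lit.eval, ha'] at hzt
    simp [Lit.eval, hz1] at hzt
    cases zb <;> simp_all [Lit.eval]
  
lemma exists_doplit {u : Clause → ℕ} {F : ClauseSet} {C' : Clause}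
    (hC' : primeImp (dope u F) C') : ∃ K ∈ F, ((u K, true) : Lit) ∈ C' := by
  by_contra h
  push_neg at h
  classical
  set a : ℕ → Bool := fun m => !(decide (((m, true) : Lit) ∈ C')) with ha
  have hsat : satisfies a (dope u F) := by
    intro K hK
    obtain ⟨K0, hK0, rfl⟩ := mem_dope_iff.mp hK
    refine ⟨((u K0, true) : Lit), Finset.mem_insert_self _ _, ?_⟩
    simp [Lit.eval, ha, h K0 hK0]
  obtain ⟨z, hz, hzt⟩ := hC'.2.1 a hsat
  rcases z with ⟨zv, zb⟩
  cases zb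
  · have hcz : ((zv, true) : Lit) ∉ C' := hC'.1 _ hz
    simp [Lit.eval, ha, hcz] at hzt
  · simp [Lit.eval, ha, hz] at hzt

end Semantic

lemma pure_mem_prime {u : Clause → ℕ} {F : ClauseSet} {C' : Clause}
    (hu : freshDoping u F) (hC' : primeImp (dope u F) C')
    {v : ℕ} {b : Bool} {w0 : Clause}
    (hw0F : w0 ∈ F) (hw0W : ((u w0, true) : Lit) ∈ C') (hxw : ((v, b) : Lit) ∈ w0)
    (hpure : ∀ K ∈ F, ((v, !b) : Lit) ∈ K → ((u K, true) : Lit) ∉ C') :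
    ((v, b) : Lit) ∈ C' := by
  classical
  by_contra hx
  have hvF : v ∈ vars F := fst_mem_vars hxw hw0F
  have hne := hC'.2.2 _ (Finset.erase_ssubset hw0W)
  rw [entails] at hne; push_neg at hne
  obtain ⟨a, ha, hnsat⟩ := hne
  have hfalse : ∀ z ∈ C', z ≠ ((u w0, true) : Lit) → Lit.eval a z = false := by
    intro z hz hzy
    refine eval_true_of_ne_false (fun hzt => hnsat ?_)
    exact ⟨z, Finset.mem_erase.mpr ⟨hzy, hz⟩, hzt⟩
  set S : Finset ℕ := (F.filter (fun K => ((u K, true) : Lit) ∉ C')).image u with hS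
  set a' : ℕ → Bool := fun m =>
    if m = v then b else if m = u w0 then false else if m ∈ S then true else a m with ha'
  have hune : ∀ K ∈ F, u K ≠ v := fun K hK h => hu.1 K hK (h ▸ hvF)
  have c2 : ∀ K ∈ F, ((u K, true) : Lit) ∉ C' → a' (u K) = true := by
    intro K hK hKC
    have h1 : u K ≠ v := hune K hK
    have h2 : u K ≠ u w0 := fun h => hKC ((hu.2 hK hw0F h) ▸ hw0W)
    have h3 : u K ∈ S := Finset.mem_image_of_mem _ (Finset.mem_filter.mpr ⟨hK, hKC⟩)
    simp [ha', h1, h2, h3]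
  have c3 : a' (u w0) = false := by
    have h1 : u w0 ≠ v := hune w0 hw0F
    simp [ha', h1]
  have c4 : ∀ K ∈ F, ((u K, true) : Lit) ∈ C' → K ≠ w0 → a' (u K) = a (u K) := by
    intro K hK hKC hKw0
    have h1 : u K ≠ v := hune K hK
    have h2 : u K ≠ u w0 := fun h => hKw0 (hu.2 hK hw0F h)
    have h3 : u K ∉ S := by
      intro h
      obtain ⟨K', hK', hK'eq⟩ := Finset.mem_image.mp h
      obtain ⟨hK'F, hK'C⟩ := Finset.mem_filter.mp hK'
      exact hK'C ((hu.2 hK'F hK hK'eq) ▸ hKC)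
    simp [ha', h1, h2, h3]
  have c5 : ∀ m ∈ vars F, m ≠ v → a' m = a m := by
    intro m hm hmv
    have h2 : m ≠ u w0 := fun h => hu.1 w0 hw0F (h ▸ hm)
    have h3 : m ∉ S := by
      intro h
      obtain ⟨K', hK', hK'eq⟩ := Finset.mem_image.mp h
      exact hu.1 K' (Finset.mem_filter.mp hK').1 (hK'eq ▸ hm)
    simp [ha', hmv, h2, h3]
  have havb : a' v = b := by simp [ha']
  have evalx : Lit.eval a' ((v, b) : Lit) = true := by cases b <;> simp [Lit.eval, havb]
  have evalxc : Lit.eval a' ((v, !b) : Lit) = false := by cases b <;> simp [Lit.eval, havb]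
  have hsat' : satisfies a' (dope u F) := by
    intro Kd hKd
    obtain ⟨K, hK, rfl⟩ := mem_dope_iff.mp hKd
    by_cases hKW : ((u K, true) : Lit) ∈ C'
    · by_cases hxK : ((v, b) : Lit) ∈ K
      · exact ⟨_, Finset.mem_insert_of_mem hxK, evalx⟩
      · have hKw0 : K ≠ w0 := fun h => hxK (h ▸ hxw)
        obtain ⟨z, hz, hzt⟩ := ha _ hKd
        refine ⟨z, hz, ?_⟩
        rw [← hzt]
        rcases Finset.mem_insert.mp hz with rfl | hzK
        · simp [Lit.eval, c4 K hK hKW hKw0]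
        · have hz1 : z.1 ∈ vars F := fst_mem_vars hzK hK
          have hz1v : z.1 ≠ v := by
            intro h
            rcases lit_cases z v b h with rfl | rfl
            · exact hxK hzK
            · exact hpure K hK hzK hKW
          rcases z with ⟨zv, zb⟩
          simp only at hz1v
          cases zb <;> simp [Lit.eval, c5 zv hz1 hz1v]
    · exact ⟨_, Finset.mem_insert_self _ _, by simp [Lit.eval, c2 K hK hKW]⟩
  have hfalse' : ∀ z ∈ C', Lit.eval a' z = false := by
    intro z hz
    have hzl := mem_lits_of_prime hC' hz
    obtain ⟨K, hK, hor⟩ := mem_lits_dope_iff.mp hzl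
    have hzK : z ∈ K → Lit.eval a' z = false := by
      intro hzK
      have hz1 : z.1 ∈ vars F := fst_mem_vars hzK hK
      by_cases hz1v : z.1 = v
      · rcases lit_cases z v b hz1v with rfl | rfl
        · exact absurd hz hx
        · exact evalxc
      · have hzne : z ≠ ((u w0, true) : Lit) := by
          intro h; exact hu.1 w0 hw0F (by rw [h] at hz1; exact hz1)
        have := hfalse z hz hzne
        rw [← this]
        rcases z with ⟨zv, zb⟩
        simp only at hz1v
        cases zb <;> simp [Lit.eval, c5 zv hz1 hz1v]
    rcases hor with rfl | h
    · by_cases hKw0 : K = w0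
      · subst hKw0; simp [Lit.eval, c3]
      · have : ((u K, true) : Lit) ≠ ((u w0, true) : Lit) := by
          intro h
          exact hKw0 (hu.2 hK hw0F (by injection h))
        rw [← hfalse _ hz this]
        simp [Lit.eval, c4 K hK hz hKw0]
    · exact hzK h
  obtain ⟨z, hz, hzt⟩ := hC'.2.1 a' hsat'
  rw [hfalse' z hz] at hzt
  simp at hzt

section Tree

lemma clausesAux_nonempty (t : LTree) (C : Clause) : (t.clausesAux C).Nonempty := by
  induction t generalizing C with
  | leaf => exact ⟨C, Finset.mem_singleton_self C⟩
  | node v t1 t2 ih1 ih2 =>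
    obtain ⟨K, hK⟩ := ih1 (insert ((v, true) : Lit) C)
    exact ⟨K, Finset.mem_union_left _ hK⟩

lemma prefix_subset_of_mem {t : LTree} {C K : Clause} (h : K ∈ t.clausesAux C) : C ⊆ K := by
  induction t generalizing C with
  | leaf =>
    simp only [LTree.clausesAux, Finset.mem_singleton] at h
    subst h; exact Finset.Subset.refl _
  | node v t1 t2 ih1 ih2 =>
    rcases Finset.mem_union.mp h with h | h
    · exact (Finset.subset_insert _ _).trans (ih1 h)
    · exact (Finset.subset_insert _ _).trans (ih2 h)

lemma mem_of_mem_clausesAux {t : LTree} {C K : Clause} {y : Lit}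
    (h : K ∈ t.clausesAux C) (hy : y ∈ K) : y ∈ C ∨ y.1 ∈ t.vars := by
  induction t generalizing C with
  | leaf =>
    simp only [LTree.clausesAux, Finset.mem_singleton] at h
    subst h; exact Or.inl hy
  | node v t1 t2 ih1 ih2 =>
    have step : ∀ (b : Bool), y ∈ insert ((v, b) : Lit) C ∨ y.1 ∈ t1.vars ∪ t2.vars →
        y ∈ C ∨ y.1 ∈ (LTree.node v t1 t2).vars := by
      rintro b (h2 | h2)
      · rcases Finset.mem_insert.mp h2 with rfl | h3
        · exact Or.inr (by simp [LTree.vars])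
        · exact Or.inl h3
      · exact Or.inr (show y.1 ∈ insert v (t1.vars ∪ t2.vars) from Finset.mem_insert_of_mem h2)
    rcases Finset.mem_union.mp h with h | h
    · exact step true ((ih1 h).imp id (Finset.mem_union_left _))
    · exact step false ((ih2 h).imp id (Finset.mem_union_right _))

lemma exists_clause_of_var {t : LTree} {v : ℕ} (C : Clause) (h : v ∈ t.vars) :
    ∃ K ∈ t.clausesAux C, ∃ b : Bool, ((v, b) : Lit) ∈ K := by
  induction t generalizing C with
  | leaf => simp [LTree.vars] at h
  | node w t1 t2 ih1 ih2 =>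
    simp only [LTree.vars, Finset.mem_insert, Finset.mem_union] at h
    rcases h with rfl | h | h
    · obtain ⟨K, hK⟩ := clausesAux_nonempty t1 (insert ((v, true) : Lit) C)
      exact ⟨K, Finset.mem_union_left _ hK, true,
        prefix_subset_of_mem hK (Finset.mem_insert_self _ _)⟩
    · obtain ⟨K, hK, b, hb⟩ := ih1 (insert ((w, true) : Lit) C) h
      exact ⟨K, Finset.mem_union_left _ hK, b, hb⟩
    · obtain ⟨K, hK, b, hb⟩ := ih2 (insert ((w, false) : Lit) C) h
      exact ⟨K, Finset.mem_union_right _ hK, b, hb⟩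

lemma depthClauses_subset {j : ℕ} {t : LTree} {C : Clause} {G' : ClauseSet}
    (h : G' ∈ t.depthClauses j C) : G' ⊆ t.clausesAux C := by
  induction j generalizing t C with
  | zero =>
    simp only [LTree.depthClauses, Finset.mem_singleton] at h
    subst h; exact Finset.Subset.refl _
  | succ j ih =>
    cases t with
    | leaf => simp [LTree.depthClauses] at h
    | node v t1 t2 =>
      rcases Finset.mem_union.mp h with h | h
      · exact (ih h).trans (Finset.subset_union_left)
      · exact (ih h).trans (Finset.subset_union_right)

lemma depthClauses_nonempty {j : ℕ} {t : LTree} (C : Clause) (h : j ≤ t.minDepth) :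
    (t.depthClauses j C).Nonempty := by
  induction j generalizing t C with
  | zero => exact ⟨_, Finset.mem_singleton_self _⟩
  | succ j ih =>
    cases t with
    | leaf => simp [LTree.minDepth] at h
    | node v t1 t2 =>
      have : j ≤ t1.minDepth := by
        simp only [LTree.minDepth] at h; omega
      obtain ⟨G', hG'⟩ := ih (insert ((v, true) : Lit) C) this
      exact ⟨G', Finset.mem_union_left _ hG'⟩

lemma opp_not_mem {t' : LTree} {C : Clause} {v : ℕ} {b : Bool} {K : Clause}
    (hdv : v ∉ t'.vars) (hdC : v ∉ varsC C)
    (hK : K ∈ t'.clausesAux (insert ((v, b) : Lit) C)) : ((v, !b) : Lit) ∉ K := by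
  intro h
  rcases mem_of_mem_clausesAux hK h with h2 | h2
  · rcases Finset.mem_insert.mp h2 with h3 | h3
    · have : (!b) = b := congrArg Prod.snd h3
      simp at this
    · exact hdC (Finset.mem_image_of_mem _ h3)
  · exact hdv h2

end Tree

/-- A valid position `(t, C)` inside the tree `T`. -/
structure Pos (T : LTree) (t : LTree) (C : Clause) : Prop where
  sub : t.clausesAux C ⊆ smu1 T
  glob : ∀ v ∈ t.vars, ∀ (b : Bool), ∀ K ∈ smu1 T, ((v, b) : Lit) ∈ K → K ∈ t.clausesAux C
  dvars : ∀ v ∈ t.vars, v ∉ varsC C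
  dist : t.distinct

lemma mem_vars_node_left {v v' : ℕ} {t1 t2 : LTree} (h : v' ∈ t1.vars) :
    v' ∈ (LTree.node v t1 t2).vars :=
  show v' ∈ insert v (t1.vars ∪ t2.vars) from
    Finset.mem_insert_of_mem (Finset.mem_union_left _ h)

lemma mem_vars_node_right {v v' : ℕ} {t1 t2 : LTree} (h : v' ∈ t2.vars) :
    v' ∈ (LTree.node v t1 t2).vars :=
  show v' ∈ insert v (t1.vars ∪ t2.vars) from
    Finset.mem_insert_of_mem (Finset.mem_union_right _ h)

lemma mem_vars_node_self {v : ℕ} {t1 t2 : LTree} : v ∈ (LTree.node v t1 t2).vars :=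
  show v ∈ insert v (t1.vars ∪ t2.vars) from Finset.mem_insert_self _ _

lemma Pos.left {T v t1 t2 C} (hp : Pos T (LTree.node v t1 t2) C) :
    Pos T t1 (insert ((v, true) : Lit) C) := by
  obtain ⟨hv1, hv2, hdisj, hd1, hd2⟩ := hp.dist
  refine ⟨fun K hK => hp.sub (Finset.mem_union_left _ hK), ?_, ?_, hd1⟩
  · intro v' hv' b K hKF hvK
    rcases Finset.mem_union.mp (hp.glob v' (mem_vars_node_left hv') b K hKF hvK) with h | h
    · exact h
    · exfalso
      rcases mem_of_mem_clausesAux h hvK with h2 | h2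
      · rcases Finset.mem_insert.mp h2 with h3 | h3
        · have hvv : v' = v := by simpa using congrArg Prod.fst h3
          exact hv1 (hvv ▸ hv')
        · exact hp.dvars v' (mem_vars_node_left hv') (Finset.mem_image_of_mem _ h3)
      · exact (Finset.disjoint_left.mp hdisj) hv' h2
  · intro v' hv' hmem
    rcases Finset.mem_image.mp hmem with ⟨y, hy, hy1⟩
    rcases Finset.mem_insert.mp hy with rfl | hyC
    · have hvv : v = v' := by simpa using hy1
      exact hv1 (hvv ▸ hv')
    · exact hp.dvars v' (mem_vars_node_left hv') (Finset.mem_image.mpr ⟨y, hyC, hy1⟩)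

lemma Pos.right {T v t1 t2 C} (hp : Pos T (LTree.node v t1 t2) C) :
    Pos T t2 (insert ((v, false) : Lit) C) := by
  obtain ⟨hv1, hv2, hdisj, hd1, hd2⟩ := hp.dist
  refine ⟨fun K hK => hp.sub (Finset.mem_union_right _ hK), ?_, ?_, hd2⟩
  · intro v' hv' b K hKF hvK
    rcases Finset.mem_union.mp (hp.glob v' (mem_vars_node_right hv') b K hKF hvK) with h | h
    · exfalso
      rcases mem_of_mem_clausesAux h hvK with h2 | h2
      · rcases Finset.mem_insert.mp h2 with h3 | h3
        · have hvv : v' = v := by simpa using congrArg Prod.fst h3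
          exact hv2 (hvv ▸ hv')
        · exact hp.dvars v' (mem_vars_node_right hv') (Finset.mem_image_of_mem _ h3)
      · exact (Finset.disjoint_left.mp hdisj) h2 hv'
    · exact h
  · intro v' hv' hmem
    rcases Finset.mem_image.mp hmem with ⟨y, hy, hy1⟩
    rcases Finset.mem_insert.mp hy with rfl | hyC
    · have hvv : v = v' := by simpa using hy1
      exact hv2 (hvv ▸ hv')
    · exact hp.dvars v' (mem_vars_node_right hv') (Finset.mem_image.mpr ⟨y, hyC, hy1⟩)

lemma tvars_sub_varsF {T t C} (hp : Pos T t C) {v : ℕ} (h : v ∈ t.vars) :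
    v ∈ vars (smu1 T) := by
  obtain ⟨K, hK, b, hb⟩ := exists_clause_of_var C h
  exact fst_mem_vars hb (hp.sub hK)

def IsLocal (u : Clause → ℕ) (t : LTree) (C : Clause) (y : Lit) : Prop :=
  y.1 ∈ t.vars ∨ ∃ K ∈ t.clausesAux C, y = ((u K, true) : Lit)

def ConclP (u : Clause → ℕ) (C' : Clause) (F₀ F₁ : ClauseSet) (L : Lit → Prop) (n : ℕ) : Prop :=
  ∃ A B : Finset Lit, A ⊆ C' ∧ B ⊆ C' ∧
    (∀ y ∈ A, y ∉ pureC (dope u F₀) ∧ L y) ∧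
    (∀ y ∈ B, y ∉ pureC (dope u F₁) ∧ L y) ∧
    n ≤ A.card + B.card

lemma ConclP_swap {u C' F₀ F₁ L n} (h : ConclP u C' F₁ F₀ L n) : ConclP u C' F₀ F₁ L n := by
  obtain ⟨A, B, h1, h2, h3, h4, h5⟩ := h
  exact ⟨B, A, h2, h1, h4, h3, by omega⟩

lemma ConclP_mono_n {u C' F₀ F₁ L n m} (hmn : m ≤ n) (h : ConclP u C' F₀ F₁ L n) :
    ConclP u C' F₀ F₁ L m := by
  obtain ⟨A, B, h1, h2, h3, h4, h5⟩ := h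
  exact ⟨A, B, h1, h2, h3, h4, le_trans hmn h5⟩

lemma ConclP_mono_L {u C' F₀ F₁ n} {L L' : Lit → Prop} (hL : ∀ y, L y → L' y)
    (h : ConclP u C' F₀ F₁ L n) : ConclP u C' F₀ F₁ L' n := by
  obtain ⟨A, B, h1, h2, h3, h4, h5⟩ := h
  exact ⟨A, B, h1, h2, fun y hy => ⟨(h3 y hy).1, hL y (h3 y hy).2⟩,
    fun y hy => ⟨(h4 y hy).1, hL y (h4 y hy).2⟩, h5⟩

lemma ConclP_union {u C' F₀ F₁ n m} {L1 L2 : Lit → Prop}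
    (hsep : ∀ y, L1 y → L2 y → False)
    (h1 : ConclP u C' F₀ F₁ L1 n) (h2 : ConclP u C' F₀ F₁ L2 m) :
    ConclP u C' F₀ F₁ (fun y => L1 y ∨ L2 y) (n + m) := by
  classical
  obtain ⟨A1, B1, ha1, hb1, hA1, hB1, hc1⟩ := h1
  obtain ⟨A2, B2, ha2, hb2, hA2, hB2, hc2⟩ := h2
  have hdA : Disjoint A1 A2 := Finset.disjoint_left.mpr
    (fun {y} hy hy2 => hsep y (hA1 y hy).2 (hA2 y hy2).2)
  have hdB : Disjoint B1 B2 := Finset.disjoint_left.mpr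
    (fun {y} hy hy2 => hsep y (hB1 y hy).2 (hB2 y hy2).2)
  refine ⟨A1 ∪ A2, B1 ∪ B2, Finset.union_subset ha1 ha2, Finset.union_subset hb1 hb2, ?_, ?_, ?_⟩
  · intro y hy
    rcases Finset.mem_union.mp hy with h | h
    · exact ⟨(hA1 y h).1, Or.inl (hA1 y h).2⟩
    · exact ⟨(hA2 y h).1, Or.inr (hA2 y h).2⟩
  · intro y hy
    rcases Finset.mem_union.mp hy with h | h
    · exact ⟨(hB1 y h).1, Or.inl (hB1 y h).2⟩
    · exact ⟨(hB2 y h).1, Or.inr (hB2 y h).2⟩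
  · rw [Finset.card_union_of_disjoint hdA, Finset.card_union_of_disjoint hdB]
    omega

lemma ConclP_add_both {u C' F₀ F₁ n} {L1 L : Lit → Prop} {x : Lit}
    (h1 : ConclP u C' F₀ F₁ L1 n) (hx : x ∈ C') (h0 : x ∉ pureC (dope u F₀))
    (hx1 : x ∉ pureC (dope u F₁)) (hnx : ¬ L1 x) (hLx : L x) (hL : ∀ y, L1 y → L y) :
    ConclP u C' F₀ F₁ L (n + 2) := by
  classical
  obtain ⟨A, B, ha, hb, hA, hB, hc⟩ := h1
  have hxA : x ∉ A := fun h => hnx (hA x h).2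
  have hxB : x ∉ B := fun h => hnx (hB x h).2
  refine ⟨insert x A, insert x B, Finset.insert_subset hx ha, Finset.insert_subset hx hb,
    ?_, ?_, ?_⟩
  · intro y hy
    rcases Finset.mem_insert.mp hy with rfl | h
    · exact ⟨h0, hLx⟩
    · exact ⟨(hA y h).1, hL y (hA y h).2⟩
  · intro y hy
    rcases Finset.mem_insert.mp hy with rfl | h
    · exact ⟨hx1, hLx⟩
    · exact ⟨(hB y h).1, hL y (hB y h).2⟩
  · rw [Finset.card_insert_of_notMem hxA, Finset.card_insert_of_notMem hxB]
    omega

lemma ConclP_add_B {u C' F₀ F₁ n} {L1 L : Lit → Prop} {x : Lit}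
    (h1 : ConclP u C' F₀ F₁ L1 n) (hx : x ∈ C')
    (hx1 : x ∉ pureC (dope u F₁)) (hnx : ¬ L1 x) (hLx : L x) (hL : ∀ y, L1 y → L y) :
    ConclP u C' F₀ F₁ L (n + 1) := by
  classical
  obtain ⟨A, B, ha, hb, hA, hB, hc⟩ := h1
  have hxB : x ∉ B := fun h => hnx (hB x h).2
  refine ⟨A, insert x B, ha, Finset.insert_subset hx hb,
    fun y hy => ⟨(hA y hy).1, hL y (hA y hy).2⟩, ?_, ?_⟩
  · intro y hy
    rcases Finset.mem_insert.mp hy with rfl | h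
    · exact ⟨hx1, hLx⟩
    · exact ⟨(hB y h).1, hL y (hB y h).2⟩
  · rw [Finset.card_insert_of_notMem hxB]
    omega

lemma ConclP_single_A {u C' F₀ F₁} {L : Lit → Prop} {x : Lit}
    (hx : x ∈ C') (h0 : x ∉ pureC (dope u F₀)) (hLx : L x) :
    ConclP u C' F₀ F₁ L 1 := by
  refine ⟨{x}, ∅, Finset.singleton_subset_iff.mpr hx, Finset.empty_subset _, ?_, by simp, by simp⟩
  intro y hy
  rw [Finset.mem_singleton] at hy
  subst hy; exact ⟨h0, hLx⟩

lemma ConclP_single_B {u C' F₀ F₁} {L : Lit → Prop} {x : Lit}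
    (hx : x ∈ C') (h1 : x ∉ pureC (dope u F₁)) (hLx : L x) :
    ConclP u C' F₀ F₁ L 1 := by
  refine ⟨∅, {x}, Finset.empty_subset _, Finset.singleton_subset_iff.mpr hx, by simp, ?_, by simp⟩
  intro y hy
  rw [Finset.mem_singleton] at hy
  subst hy; exact ⟨h1, hLx⟩

lemma ConclP_two {u C' F₀ F₁} {L : Lit → Prop} {x : Lit}
    (hx : x ∈ C') (h0 : x ∉ pureC (dope u F₀)) (h1 : x ∉ pureC (dope u F₁)) (hLx : L x) :
    ConclP u C' F₀ F₁ L 2 := by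
  refine ⟨{x}, {x}, Finset.singleton_subset_iff.mpr hx, Finset.singleton_subset_iff.mpr hx,
    ?_, ?_, by simp⟩ <;>
  · intro y hy
    rw [Finset.mem_singleton] at hy
    subst hy; first | exact ⟨h0, hLx⟩ | exact ⟨h1, hLx⟩

lemma treelit_not_pure {u : Clause → ℕ} {Fi : ClauseSet} {x : Lit} {K : Clause}
    (hK : K ∈ Fi) (h : Lit.comp x ∈ K) : x ∉ pureC (dope u Fi) :=
  fun hx => (mem_pureC_iff.mp hx).2 (mem_lits_dope_iff.mpr ⟨K, hK, Or.inr h⟩)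

lemma doplit_not_pure {T : LTree} {u : Clause → ℕ} (hu : freshDoping u (smu1 T))
    {Fi : ClauseSet} (hFi : Fi ⊆ smu1 T) {K : Clause} (hKF : K ∈ smu1 T) (hKi : K ∉ Fi) :
    ((u K, true) : Lit) ∉ pureC (dope u Fi) := by
  intro h
  obtain ⟨K', hK', hor⟩ := mem_lits_dope_iff.mp (mem_pureC_iff.mp h).1
  rcases hor with heq | hmem
  · have huu : u K = u K' := by simpa using congrArg Prod.fst heq
    exact hKi ((hu.2 hKF (hFi hK') huu) ▸ hK')
  · have : u K ∈ vars Fi := fst_mem_vars hmem hK'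
    have hsub : vars Fi ⊆ vars (smu1 T) := Finset.le_iff_subset.mp (Finset.sup_mono hFi)
    exact hu.1 K hKF (hsub this)

lemma ConclP_add_A {u C' F₀ F₁ n} {L1 L : Lit → Prop} {x : Lit}
    (h1 : ConclP u C' F₀ F₁ L1 n) (hx : x ∈ C')
    (hx0 : x ∉ pureC (dope u F₀)) (hnx : ¬ L1 x) (hLx : L x) (hL : ∀ y, L1 y → L y) :
    ConclP u C' F₀ F₁ L (n + 1) := by
  classical
  obtain ⟨A, B, ha, hb, hA, hB, hc⟩ := h1
  have hxA : x ∉ A := fun h => hnx (hA x h).2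
  refine ⟨insert x A, B, Finset.insert_subset hx ha, hb, ?_,
    fun y hy => ⟨(hB y hy).1, hL y (hB y hy).2⟩, ?_⟩
  · intro y hy
    rcases Finset.mem_insert.mp hy with rfl | h
    · exact ⟨hx0, hLx⟩
    · exact ⟨(hA y h).1, hL y (hA y h).2⟩
  · rw [Finset.card_insert_of_notMem hxA]
    omega

lemma isLocal_mono_left {u : Clause → ℕ} {v : ℕ} {t1 t2 : LTree} {C : Clause} {y : Lit}
    (h : IsLocal u t1 (insert ((v, true) : Lit) C) y) : IsLocal u (LTree.node v t1 t2) C y := by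
  rcases h with h | ⟨K, hK, rfl⟩
  · exact Or.inl (mem_vars_node_left h)
  · exact Or.inr ⟨K, Finset.mem_union_left _ hK, rfl⟩

lemma isLocal_mono_right {u : Clause → ℕ} {v : ℕ} {t1 t2 : LTree} {C : Clause} {y : Lit}
    (h : IsLocal u t2 (insert ((v, false) : Lit) C) y) : IsLocal u (LTree.node v t1 t2) C y := by
  rcases h with h | ⟨K, hK, rfl⟩
  · exact Or.inl (mem_vars_node_right h)
  · exact Or.inr ⟨K, Finset.mem_union_right _ hK, rfl⟩

lemma local_sep {T : LTree} {u : Clause → ℕ} {v : ℕ} {t1 t2 : LTree} {C : Clause}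
    (hu : freshDoping u (smu1 T)) (hp : Pos T (LTree.node v t1 t2) C) :
    ∀ y, IsLocal u t1 (insert ((v, true) : Lit) C) y →
      IsLocal u t2 (insert ((v, false) : Lit) C) y → False := by
  intro y h1 h2
  obtain ⟨hv1, hv2, hdisj, hd1, hd2⟩ := hp.dist
  rcases h1 with h1 | ⟨K, hK, rfl⟩
  · rcases h2 with h2 | ⟨K, hK, heq⟩
    · exact Finset.disjoint_left.mp hdisj h1 h2
    · have hy1 : y.1 = u K := by rw [heq]
      exact hu.1 K (hp.sub (Finset.mem_union_right _ hK)) (hy1 ▸ tvars_sub_varsF hp.left h1)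
  · rcases h2 with h2 | ⟨K', hK', heq⟩
    · exact hu.1 K (hp.sub (Finset.mem_union_left _ hK)) (tvars_sub_varsF hp.right h2)
    · have huu : u K = u K' := by simpa using congrArg Prod.fst heq
      have hKK : K = K' := hu.2 (hp.sub (Finset.mem_union_left _ hK))
        (hp.sub (Finset.mem_union_right _ hK')) huu
      have hmem : ((v, true) : Lit) ∈ K := prefix_subset_of_mem hK (Finset.mem_insert_self _ _)
      have hno : ((v, !false) : Lit) ∉ K :=
        opp_not_mem hv2 (hp.dvars v mem_vars_node_self) (hKK ▸ hK')
      exact hno (by simpa using hmem)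

lemma edge_not_local_left {T : LTree} {u : Clause → ℕ} {v : ℕ} {t1 t2 : LTree} {C : Clause}
    {b' : Bool} (hu : freshDoping u (smu1 T)) (hp : Pos T (LTree.node v t1 t2) C) :
    ¬ IsLocal u t1 (insert ((v, true) : Lit) C) ((v, b') : Lit) := by
  rintro (h | ⟨K, hK, heq⟩)
  · exact hp.dist.1 h
  · have hv : v = u K := by simpa using congrArg Prod.fst heq
    exact hu.1 K (hp.sub (Finset.mem_union_left _ hK))
      (hv ▸ tvars_sub_varsF hp mem_vars_node_self)

lemma edge_not_local_right {T : LTree} {u : Clause → ℕ} {v : ℕ} {t1 t2 : LTree} {C : Clause}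
    {b' : Bool} (hu : freshDoping u (smu1 T)) (hp : Pos T (LTree.node v t1 t2) C) :
    ¬ IsLocal u t2 (insert ((v, false) : Lit) C) ((v, b') : Lit) := by
  rintro (h | ⟨K, hK, heq⟩)
  · exact hp.dist.2.1 h
  · have hv : v = u K := by simpa using congrArg Prod.fst heq
    exact hu.1 K (hp.sub (Finset.mem_union_right _ hK))
      (hv ▸ tvars_sub_varsF hp mem_vars_node_self)

/-- If the doped variables of `C'` occur (only) in the left subtree, the edge literal
to the left subtree belongs to `C'`. -/
lemma edge_mem_left {T : LTree} {u : Clause → ℕ} {C' : Clause} {v : ℕ} {t1 t2 : LTree}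
    {C : Clause} (hu : freshDoping u (smu1 T)) (hC' : primeImp (dope u (smu1 T)) C')
    (hp : Pos T (LTree.node v t1 t2) C)
    (hW : ∃ K ∈ t1.clausesAux (insert ((v, true) : Lit) C),
      K ∈ smu1 T ∧ ((u K, true) : Lit) ∈ C')
    (hnoW : ∀ K ∈ t2.clausesAux (insert ((v, false) : Lit) C), ((u K, true) : Lit) ∉ C') :
    ((v, true) : Lit) ∈ C' := by
  obtain ⟨w0, hw0G, hw0F, hw0C⟩ := hW
  refine pure_mem_prime (b := true) hu hC' hw0F hw0C
    (prefix_subset_of_mem hw0G (Finset.mem_insert_self _ _)) ?_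
  intro K hKF hvK
  have hG := hp.glob v mem_vars_node_self false K hKF (by simpa using hvK)
  rcases Finset.mem_union.mp hG with h | h
  · exact absurd (by simpa using hvK)
      (opp_not_mem (b := true) hp.dist.1 (hp.dvars v mem_vars_node_self) h)
  · exact hnoW K h

lemma edge_mem_right {T : LTree} {u : Clause → ℕ} {C' : Clause} {v : ℕ} {t1 t2 : LTree}
    {C : Clause} (hu : freshDoping u (smu1 T)) (hC' : primeImp (dope u (smu1 T)) C')
    (hp : Pos T (LTree.node v t1 t2) C)
    (hW : ∃ K ∈ t2.clausesAux (insert ((v, false) : Lit) C),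
      K ∈ smu1 T ∧ ((u K, true) : Lit) ∈ C')
    (hnoW : ∀ K ∈ t1.clausesAux (insert ((v, true) : Lit) C), ((u K, true) : Lit) ∉ C') :
    ((v, false) : Lit) ∈ C' := by
  obtain ⟨w0, hw0G, hw0F, hw0C⟩ := hW
  refine pure_mem_prime (b := false) hu hC' hw0F hw0C
    (prefix_subset_of_mem hw0G (Finset.mem_insert_self _ _)) ?_
  intro K hKF hvK
  have hG := hp.glob v mem_vars_node_self true K hKF (by simpa using hvK)
  rcases Finset.mem_union.mp hG with h | h
  · exact hnoW K h
  · exact absurd (by simpa using hvK)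
      (opp_not_mem (b := false) hp.dist.2.1 (hp.dvars v mem_vars_node_self) h)

lemma lemJ {T : LTree} {u : Clause → ℕ} {C' : Clause} (F₀ F₁ : ClauseSet)
    (hu : freshDoping u (smu1 T)) (hC' : primeImp (dope u (smu1 T)) C')
    (hF₁ : F₁ ⊆ smu1 T)
    (t : LTree) (C : Clause) (hp : Pos T t C)
    (hW : ∃ K ∈ t.clausesAux C, K ∈ smu1 T ∧ ((u K, true) : Lit) ∈ C')
    (hd : ∃ K ∈ t.clausesAux C, K ∈ F₀ ∧ K ∉ F₁) :
    ConclP u C' F₀ F₁ (IsLocal u t C) 1 := by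
  induction t generalizing C with
  | leaf =>
    obtain ⟨Kw, hKw, hKwF, hKwC⟩ := hW
    obtain ⟨Kd, hKd, hKd0, hKd1⟩ := hd
    simp only [LTree.clausesAux, Finset.mem_singleton] at hKw hKd
    have hKdKw : Kd = Kw := hKd.trans hKw.symm
    exact ConclP_single_B hKwC (doplit_not_pure hu hF₁ hKwF (hKdKw ▸ hKd1))
      (Or.inr ⟨Kw, by simp [LTree.clausesAux, hKw], rfl⟩)
  | node v t1 t2 ih1 ih2 =>
    classical
    by_cases hW1 : ∃ K ∈ t1.clausesAux (insert ((v, true) : Lit) C),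
        K ∈ smu1 T ∧ ((u K, true) : Lit) ∈ C'
    · by_cases hd1 : ∃ K ∈ t1.clausesAux (insert ((v, true) : Lit) C), K ∈ F₀ ∧ K ∉ F₁
      · exact ConclP_mono_L (fun y => isLocal_mono_left) (ih1 _ hp.left hW1 hd1)
      · -- the witness of hd must be in the right subtree
        obtain ⟨Kd, hKd, hKd0, hKd1⟩ := hd
        rcases Finset.mem_union.mp hKd with h | h
        · exact absurd ⟨Kd, h, hKd0, hKd1⟩ hd1
        · -- x := (v,true) if right subtree is W-free, else recurse? No: W on left, d on right.
          by_cases hW2 : ∃ K ∈ t2.clausesAux (insert ((v, false) : Lit) C),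
              K ∈ smu1 T ∧ ((u K, true) : Lit) ∈ C'
          · -- W also hits right side, and d is on the right: recurse right
            exact ConclP_mono_L (fun y => isLocal_mono_right) (ih2 _ hp.right hW2 ⟨Kd, h, hKd0, hKd1⟩)
          · push_neg at hW2
            have hx : ((v, true) : Lit) ∈ C' :=
              edge_mem_left hu hC' hp hW1 (fun K hK => hW2 K hK (hp.sub (Finset.mem_union_right _ hK)))
            have hcomp : ((v, false) : Lit) ∈ Kd :=
              prefix_subset_of_mem h (Finset.mem_insert_self _ _)
            exact ConclP_single_A hx
              (treelit_not_pure hKd0 (by simpa [Lit.comp] using hcomp))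
              (Or.inl mem_vars_node_self)
    · -- W misses left subtree, so it hits the right one
      obtain ⟨Kw, hKw, hKwF, hKwC⟩ := hW
      have hW2 : ∃ K ∈ t2.clausesAux (insert ((v, false) : Lit) C),
          K ∈ smu1 T ∧ ((u K, true) : Lit) ∈ C' := by
        rcases Finset.mem_union.mp hKw with h | h
        · exact absurd ⟨Kw, h, hKwF, hKwC⟩ hW1
        · exact ⟨Kw, h, hKwF, hKwC⟩
      by_cases hd2 : ∃ K ∈ t2.clausesAux (insert ((v, false) : Lit) C), K ∈ F₀ ∧ K ∉ F₁
      · exact ConclP_mono_L (fun y => isLocal_mono_right) (ih2 _ hp.right hW2 hd2)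
      · obtain ⟨Kd, hKd, hKd0, hKd1⟩ := hd
        have hKdl : Kd ∈ t1.clausesAux (insert ((v, true) : Lit) C) := by
          rcases Finset.mem_union.mp hKd with h | h
          · exact h
          · exact absurd ⟨Kd, h, hKd0, hKd1⟩ hd2
        push_neg at hW1
        have hx : ((v, false) : Lit) ∈ C' :=
          edge_mem_right hu hC' hp hW2 (fun K hK => hW1 K hK (hp.sub (Finset.mem_union_left _ hK)))
        have hcomp : ((v, true) : Lit) ∈ Kd :=
          prefix_subset_of_mem hKdl (Finset.mem_insert_self _ _)
        exact ConclP_single_A hx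
          (treelit_not_pure hKd0 (by simpa [Lit.comp] using hcomp))
          (Or.inl mem_vars_node_self)

lemma lemI {T : LTree} {u : Clause → ℕ} {C' : Clause} (F₀ F₁ : ClauseSet)
    (hu : freshDoping u (smu1 T)) (hC' : primeImp (dope u (smu1 T)) C')
    (hF₀ : F₀ ⊆ smu1 T) (hF₁ : F₁ ⊆ smu1 T)
    (t : LTree) (C : Clause) (hp : Pos T t C)
    (hW : ∃ K ∈ t.clausesAux C, K ∈ smu1 T ∧ ((u K, true) : Lit) ∈ C')
    (hd0 : ∃ K ∈ t.clausesAux C, K ∈ F₀ ∧ K ∉ F₁)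
    (hd1 : ∃ K ∈ t.clausesAux C, K ∈ F₁ ∧ K ∉ F₀) :
    ConclP u C' F₀ F₁ (IsLocal u t C) 2 := by
  induction t generalizing C with
  | leaf =>
    obtain ⟨K0, hK0, h00, h01⟩ := hd0
    obtain ⟨K1, hK1, h10, h11⟩ := hd1
    simp only [LTree.clausesAux, Finset.mem_singleton] at hK0 hK1
    exact absurd ((hK1.trans hK0.symm) ▸ h10) h01
  | node v t1 t2 ih1 ih2 =>
    classical
    have hmonoL : ∀ (y : Lit), IsLocal u t1 (insert ((v, true) : Lit) C) y →
        IsLocal u (LTree.node v t1 t2) C y := fun y => isLocal_mono_left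
    have hmonoR : ∀ (y : Lit), IsLocal u t2 (insert ((v, false) : Lit) C) y →
        IsLocal u (LTree.node v t1 t2) C y := fun y => isLocal_mono_right
    have hsep := local_sep hu hp
    have hmonoU : ∀ (y : Lit), (IsLocal u t1 (insert ((v, true) : Lit) C) y ∨
        IsLocal u t2 (insert ((v, false) : Lit) C) y) →
        IsLocal u (LTree.node v t1 t2) C y :=
      fun y h => h.elim (hmonoL y) (hmonoR y)
    obtain ⟨Kw, hKw, hKwh⟩ := hW
    obtain ⟨K0, hK0, hK0h⟩ := hd0
    obtain ⟨K1, hK1, hK1h⟩ := hd1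
    rcases Finset.mem_union.mp hKw with hP1 | hP2
    · -- W hits the left subtree
      have hWl : ∃ K ∈ t1.clausesAux (insert ((v, true) : Lit) C),
          K ∈ smu1 T ∧ ((u K, true) : Lit) ∈ C' := ⟨Kw, hP1, hKwh⟩
      rcases Finset.mem_union.mp hK0 with hQ1 | hQ2
      · rcases Finset.mem_union.mp hK1 with hR1 | hR2
        · exact ConclP_mono_L hmonoL (ih1 _ hp.left hWl ⟨K0, hQ1, hK0h⟩ ⟨K1, hR1, hK1h⟩)
        · -- J0 on the left; right side holds a F₁-difference clause
          have hJ0 := lemJ F₀ F₁ hu hC' hF₁ t1 _ hp.left hWl ⟨K0, hQ1, hK0h⟩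
          by_cases hP2 : ∃ K ∈ t2.clausesAux (insert ((v, false) : Lit) C),
              K ∈ smu1 T ∧ ((u K, true) : Lit) ∈ C'
          · have hJ1 := ConclP_swap (lemJ F₁ F₀ hu hC' hF₀ t2 _ hp.right hP2 ⟨K1, hR2, hK1h⟩)
            exact ConclP_mono_L hmonoU (ConclP_union hsep hJ0 hJ1)
          · push_neg at hP2
            have hx : ((v, true) : Lit) ∈ C' := edge_mem_left hu hC' hp hWl
              (fun K hK => hP2 K hK (hp.sub (Finset.mem_union_right _ hK)))
            have hcomp : ((v, false) : Lit) ∈ K1 :=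
              prefix_subset_of_mem hR2 (Finset.mem_insert_self _ _)
            exact ConclP_add_B hJ0 hx
              (treelit_not_pure hK1h.1 (by simpa [Lit.comp] using hcomp))
              (edge_not_local_left hu hp) (Or.inl mem_vars_node_self) hmonoL
      · rcases Finset.mem_union.mp hK1 with hR1 | hR2
        · -- J1 on the left; right side holds a F₀-difference clause
          have hJ1 := ConclP_swap (lemJ F₁ F₀ hu hC' hF₀ t1 _ hp.left hWl ⟨K1, hR1, hK1h⟩)
          by_cases hP2 : ∃ K ∈ t2.clausesAux (insert ((v, false) : Lit) C),
              K ∈ smu1 T ∧ ((u K, true) : Lit) ∈ C'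
          · have hJ0 := lemJ F₀ F₁ hu hC' hF₁ t2 _ hp.right hP2 ⟨K0, hQ2, hK0h⟩
            exact ConclP_mono_L hmonoU (ConclP_union hsep hJ1 hJ0)
          · push_neg at hP2
            have hx : ((v, true) : Lit) ∈ C' := edge_mem_left hu hC' hp hWl
              (fun K hK => hP2 K hK (hp.sub (Finset.mem_union_right _ hK)))
            have hcomp : ((v, false) : Lit) ∈ K0 :=
              prefix_subset_of_mem hQ2 (Finset.mem_insert_self _ _)
            exact ConclP_add_A hJ1 hx
              (treelit_not_pure hK0h.1 (by simpa [Lit.comp] using hcomp))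
              (edge_not_local_left hu hp) (Or.inl mem_vars_node_self) hmonoL
        · by_cases hP2 : ∃ K ∈ t2.clausesAux (insert ((v, false) : Lit) C),
              K ∈ smu1 T ∧ ((u K, true) : Lit) ∈ C'
          · exact ConclP_mono_L hmonoR (ih2 _ hp.right hP2 ⟨K0, hQ2, hK0h⟩ ⟨K1, hR2, hK1h⟩)
          · push_neg at hP2
            have hx : ((v, true) : Lit) ∈ C' := edge_mem_left hu hC' hp hWl
              (fun K hK => hP2 K hK (hp.sub (Finset.mem_union_right _ hK)))
            have hcomp0 : ((v, false) : Lit) ∈ K0 :=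
              prefix_subset_of_mem hQ2 (Finset.mem_insert_self _ _)
            have hcomp1 : ((v, false) : Lit) ∈ K1 :=
              prefix_subset_of_mem hR2 (Finset.mem_insert_self _ _)
            exact ConclP_two hx
              (treelit_not_pure hK0h.1 (by simpa [Lit.comp] using hcomp0))
              (treelit_not_pure hK1h.1 (by simpa [Lit.comp] using hcomp1))
              (Or.inl mem_vars_node_self)
    · -- W hits the right subtree
      have hWr : ∃ K ∈ t2.clausesAux (insert ((v, false) : Lit) C),
          K ∈ smu1 T ∧ ((u K, true) : Lit) ∈ C' := ⟨Kw, hP2, hKwh⟩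
      rcases Finset.mem_union.mp hK0 with hQ1 | hQ2
      · rcases Finset.mem_union.mp hK1 with hR1 | hR2
        · by_cases hP1 : ∃ K ∈ t1.clausesAux (insert ((v, true) : Lit) C),
              K ∈ smu1 T ∧ ((u K, true) : Lit) ∈ C'
          · exact ConclP_mono_L hmonoL (ih1 _ hp.left hP1 ⟨K0, hQ1, hK0h⟩ ⟨K1, hR1, hK1h⟩)
          · push_neg at hP1
            have hx : ((v, false) : Lit) ∈ C' := edge_mem_right hu hC' hp hWr
              (fun K hK => hP1 K hK (hp.sub (Finset.mem_union_left _ hK)))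
            have hcomp0 : ((v, true) : Lit) ∈ K0 :=
              prefix_subset_of_mem hQ1 (Finset.mem_insert_self _ _)
            have hcomp1 : ((v, true) : Lit) ∈ K1 :=
              prefix_subset_of_mem hR1 (Finset.mem_insert_self _ _)
            exact ConclP_two hx
              (treelit_not_pure hK0h.1 (by simpa [Lit.comp] using hcomp0))
              (treelit_not_pure hK1h.1 (by simpa [Lit.comp] using hcomp1))
              (Or.inl mem_vars_node_self)
        · -- J1 on the right; left side holds a F₀-difference clause
          have hJ1 := ConclP_swap (lemJ F₁ F₀ hu hC' hF₀ t2 _ hp.right hWr ⟨K1, hR2, hK1h⟩)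
          by_cases hP1 : ∃ K ∈ t1.clausesAux (insert ((v, true) : Lit) C),
              K ∈ smu1 T ∧ ((u K, true) : Lit) ∈ C'
          · have hJ0 := lemJ F₀ F₁ hu hC' hF₁ t1 _ hp.left hP1 ⟨K0, hQ1, hK0h⟩
            exact ConclP_mono_L hmonoU (ConclP_union hsep hJ0 hJ1)
          · push_neg at hP1
            have hx : ((v, false) : Lit) ∈ C' := edge_mem_right hu hC' hp hWr
              (fun K hK => hP1 K hK (hp.sub (Finset.mem_union_left _ hK)))
            have hcomp : ((v, true) : Lit) ∈ K0 :=
              prefix_subset_of_mem hQ1 (Finset.mem_insert_self _ _)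
            exact ConclP_add_A hJ1 hx
              (treelit_not_pure hK0h.1 (by simpa [Lit.comp] using hcomp))
              (edge_not_local_right hu hp) (Or.inl mem_vars_node_self) hmonoR
      · rcases Finset.mem_union.mp hK1 with hR1 | hR2
        · -- J0 on the right; left side holds a F₁-difference clause
          have hJ0 := lemJ F₀ F₁ hu hC' hF₁ t2 _ hp.right hWr ⟨K0, hQ2, hK0h⟩
          by_cases hP1 : ∃ K ∈ t1.clausesAux (insert ((v, true) : Lit) C),
              K ∈ smu1 T ∧ ((u K, true) : Lit) ∈ C'
          · have hJ1 := ConclP_swap (lemJ F₁ F₀ hu hC' hF₀ t1 _ hp.left hP1 ⟨K1, hR1, hK1h⟩)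
            exact ConclP_mono_L hmonoU (ConclP_union hsep hJ1 hJ0)
          · push_neg at hP1
            have hx : ((v, false) : Lit) ∈ C' := edge_mem_right hu hC' hp hWr
              (fun K hK => hP1 K hK (hp.sub (Finset.mem_union_left _ hK)))
            have hcomp : ((v, true) : Lit) ∈ K1 :=
              prefix_subset_of_mem hR1 (Finset.mem_insert_self _ _)
            exact ConclP_add_B hJ0 hx
              (treelit_not_pure hK1h.1 (by simpa [Lit.comp] using hcomp))
              (edge_not_local_right hu hp) (Or.inl mem_vars_node_self) hmonoR
        · exact ConclP_mono_L hmonoR (ih2 _ hp.right hWr ⟨K0, hQ2, hK0h⟩ ⟨K1, hR2, hK1h⟩)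

lemma lemS {T : LTree} {u : Clause → ℕ} {C' : Clause} (F₀ F₁ : ClauseSet)
    (hu : freshDoping u (smu1 T)) (hC' : primeImp (dope u (smu1 T)) C')
    (hF₀ : F₀ ⊆ smu1 T) (hF₁ : F₁ ⊆ smu1 T)
    (t : LTree) (C : Clause) (j : ℕ) (hp : Pos T t C)
    (hW : ∃ K ∈ t.clausesAux C, K ∈ smu1 T ∧ ((u K, true) : Lit) ∈ C')
    (hdj : j < t.minDepth)
    (hinc : ∀ G' ∈ LTree.depthClauses j t C, ¬ (F₀ ∩ G' ⊆ F₁ ∩ G') ∧ ¬ (F₁ ∩ G' ⊆ F₀ ∩ G')) :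
    ConclP u C' F₀ F₁ (IsLocal u t C) (2 * (j + 1)) := by
  induction t generalizing C j with
  | leaf => simp [LTree.minDepth] at hdj
  | node v t1 t2 ih1 ih2 =>
    classical
    have hmonoL : ∀ (y : Lit), IsLocal u t1 (insert ((v, true) : Lit) C) y →
        IsLocal u (LTree.node v t1 t2) C y := fun y => isLocal_mono_left
    have hmonoR : ∀ (y : Lit), IsLocal u t2 (insert ((v, false) : Lit) C) y →
        IsLocal u (LTree.node v t1 t2) C y := fun y => isLocal_mono_right
    have hsep := local_sep hu hp
    cases j with
    | zero =>
      obtain ⟨hn0, hn1⟩ := hinc _ (Finset.mem_singleton_self _)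
      obtain ⟨K0, hK0m, hK0n⟩ := Finset.not_subset.mp hn0
      obtain ⟨K1, hK1m, hK1n⟩ := Finset.not_subset.mp hn1
      obtain ⟨hK00, hK0G⟩ := Finset.mem_inter.mp hK0m
      obtain ⟨hK11, hK1G⟩ := Finset.mem_inter.mp hK1m
      refine ConclP_mono_n (by omega) (lemI F₀ F₁ hu hC' hF₀ hF₁ _ C hp hW
        ⟨K0, hK0G, hK00, fun h => hK0n (Finset.mem_inter.mpr ⟨h, hK0G⟩)⟩
        ⟨K1, hK1G, hK11, fun h => hK1n (Finset.mem_inter.mpr ⟨h, hK1G⟩)⟩)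
    | succ j =>
      have hdj' : j < t1.minDepth ∧ j < t2.minDepth := by
        simp only [LTree.minDepth] at hdj; omega
      have hinc1 : ∀ G' ∈ LTree.depthClauses j t1 (insert ((v, true) : Lit) C),
          ¬ (F₀ ∩ G' ⊆ F₁ ∩ G') ∧ ¬ (F₁ ∩ G' ⊆ F₀ ∩ G') :=
        fun G' hG' => hinc G' (Finset.mem_union_left _ hG')
      have hinc2 : ∀ G' ∈ LTree.depthClauses j t2 (insert ((v, false) : Lit) C),
          ¬ (F₀ ∩ G' ⊆ F₁ ∩ G') ∧ ¬ (F₁ ∩ G' ⊆ F₀ ∩ G') :=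
        fun G' hG' => hinc G' (Finset.mem_union_right _ hG')
      -- difference clauses on each side, from any depth-j subtree of that side
      obtain ⟨Ga, hGa⟩ := depthClauses_nonempty (t := t1) (insert ((v, true) : Lit) C)
        (le_of_lt hdj'.1)
      obtain ⟨Gb, hGb⟩ := depthClauses_nonempty (t := t2) (insert ((v, false) : Lit) C)
        (le_of_lt hdj'.2)
      obtain ⟨Kw, hKw, hKwh⟩ := hW
      by_cases hP1 : ∃ K ∈ t1.clausesAux (insert ((v, true) : Lit) C),
          K ∈ smu1 T ∧ ((u K, true) : Lit) ∈ C'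
      · by_cases hP2 : ∃ K ∈ t2.clausesAux (insert ((v, false) : Lit) C),
            K ∈ smu1 T ∧ ((u K, true) : Lit) ∈ C'
        · have h1 := ih1 _ j hp.left hP1 hdj'.1 hinc1
          have h2 := ih2 _ j hp.right hP2 hdj'.2 hinc2
          exact ConclP_mono_L (fun y h => h.elim (hmonoL y) (hmonoR y))
            (ConclP_mono_n (by omega) (ConclP_union hsep h1 h2))
        · push_neg at hP2
          have hx : ((v, true) : Lit) ∈ C' := edge_mem_left hu hC' hp hP1
            (fun K hK => hP2 K hK (hp.sub (Finset.mem_union_right _ hK)))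
          obtain ⟨hb0, hb1⟩ := hinc2 Gb hGb
          obtain ⟨K0, hK0m, -⟩ := Finset.not_subset.mp hb0
          obtain ⟨K1, hK1m, -⟩ := Finset.not_subset.mp hb1
          obtain ⟨hK00, hK0G⟩ := Finset.mem_inter.mp hK0m
          obtain ⟨hK11, hK1G⟩ := Finset.mem_inter.mp hK1m
          have hcomp0 : ((v, false) : Lit) ∈ K0 :=
            prefix_subset_of_mem (depthClauses_subset hGb hK0G) (Finset.mem_insert_self _ _)
          have hcomp1 : ((v, false) : Lit) ∈ K1 :=
            prefix_subset_of_mem (depthClauses_subset hGb hK1G) (Finset.mem_insert_self _ _)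
          have h1 := ih1 _ j hp.left hP1 hdj'.1 hinc1
          refine ConclP_mono_n (by omega) (ConclP_add_both h1 hx
            (treelit_not_pure hK00 (by simpa [Lit.comp] using hcomp0))
            (treelit_not_pure hK11 (by simpa [Lit.comp] using hcomp1))
            (edge_not_local_left hu hp) (Or.inl mem_vars_node_self) hmonoL)
      · have hP2 : ∃ K ∈ t2.clausesAux (insert ((v, false) : Lit) C),
            K ∈ smu1 T ∧ ((u K, true) : Lit) ∈ C' := by
          rcases Finset.mem_union.mp hKw with h | h
          · exact absurd ⟨Kw, h, hKwh⟩ hP1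
          · exact ⟨Kw, h, hKwh⟩
        push_neg at hP1
        have hx : ((v, false) : Lit) ∈ C' := edge_mem_right hu hC' hp hP2
          (fun K hK => hP1 K hK (hp.sub (Finset.mem_union_left _ hK)))
        obtain ⟨ha0, ha1⟩ := hinc1 Ga hGa
        obtain ⟨K0, hK0m, -⟩ := Finset.not_subset.mp ha0
        obtain ⟨K1, hK1m, -⟩ := Finset.not_subset.mp ha1
        obtain ⟨hK00, hK0G⟩ := Finset.mem_inter.mp hK0m
        obtain ⟨hK11, hK1G⟩ := Finset.mem_inter.mp hK1m
        have hcomp0 : ((v, true) : Lit) ∈ K0 :=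
          prefix_subset_of_mem (depthClauses_subset hGa hK0G) (Finset.mem_insert_self _ _)
        have hcomp1 : ((v, true) : Lit) ∈ K1 :=
          prefix_subset_of_mem (depthClauses_subset hGa hK1G) (Finset.mem_insert_self _ _)
        have h2 := ih2 _ j hp.right hP2 hdj'.2 hinc2
        refine ConclP_mono_n (by omega) (ConclP_add_both h2 hx
          (treelit_not_pure hK00 (by simpa [Lit.comp] using hcomp0))
          (treelit_not_pure hK11 (by simpa [Lit.comp] using hcomp1))
          (edge_not_local_right hu hp) (Or.inl mem_vars_node_self) hmonoR)
/-- For depth-k-incomparable nonempty leaf sets (given via their clause-sets F₀, F₁)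
of a tree all of whose leaves have depth at least k+1, the corresponding hyperedges of
the trigger hypergraph of the doped clause-set are disjoint. -/
theorem depthIncomparable_hyperedges_disjoint (T : LTree) (hT : T.distinct) (k : ℕ)
    (hdepth : k + 1 ≤ T.minDepth) (u : Clause → ℕ) (hu : freshDoping u (smu1 T))
    (F₀ F₁ : ClauseSet) (h0 : F₀ ⊆ smu1 T) (h1 : F₁ ⊆ smu1 T)
    (hn0 : F₀.Nonempty) (hn1 : F₁.Nonempty)
    (hinc : ∀ G ∈ LTree.depthClauses k T ∅,
      ¬ (F₀ ∩ G ⊆ F₁ ∩ G) ∧ ¬ (F₁ ∩ G ⊆ F₀ ∩ G)) :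
    Disjoint (Ek (dope u (smu1 T)) k (pureC (dope u F₀)))
      (Ek (dope u (smu1 T)) k (pureC (dope u F₁))) := by
  rw [Set.disjoint_left]
  intro C' h0e h1e
  simp only [Ek, Set.mem_setOf_eq] at h0e h1e
  obtain ⟨hC', -, hcard0⟩ := h0e
  obtain ⟨-, -, hcard1⟩ := h1e
  have hp : Pos T T ∅ := by
    refine ⟨Finset.Subset.refl _, ?_, ?_, hT⟩
    · intro v hv b K hK _
      exact hK
    · intro v _ hv
      simp [varsC] at hv
  obtain ⟨Kw, hKwF, hKwC⟩ := exists_doplit hC'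
  have hW : ∃ K ∈ LTree.clausesAux T ∅, K ∈ smu1 T ∧ ((u K, true) : Lit) ∈ C' :=
    ⟨Kw, hKwF, hKwF, hKwC⟩
  have hdj : k < T.minDepth := by omega
  obtain ⟨A, B, hA, hB, hA2, hB2, hcard⟩ :=
    lemS F₀ F₁ hu hC' h0 h1 T ∅ k hp hW hdj hinc
  have hAs : A ⊆ C' \ pureC (dope u F₀) := fun y hy =>
    Finset.mem_sdiff.mpr ⟨hA hy, (hA2 y hy).1⟩
  have hBs : B ⊆ C' \ pureC (dope u F₁) := fun y hy =>
    Finset.mem_sdiff.mpr ⟨hB hy, (hB2 y hy).1⟩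
  have h1c := le_trans (Finset.card_le_card hAs) hcard0
  have h2c := le_trans (Finset.card_le_card hBs) hcard1
  omega
end
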